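/- arXiv:2204.08517 — 7 statements merged into one kernel-verified Lean document; each statement's English description precedes it below -/
import Mathlib

section
/- For every z ∈ ℂ³ there exists a unitary 4×4 complex matrix U such that for every 4×4 complex matrix T with operator norm ‖T‖ ≤ 1 one has ‖z_T‖ ≤ ‖z_U‖. In other words, the supremum of ‖z_T‖ over all contractions T on ℂ² ⊕ ℂ² is attained, and it is attained at a unitary. -/
noncomputable section

/-- The `ℓ² → ℓ²` operator norm of a complex matrix. -/
def opNorm {m n : Type*} [Fintype m] [Fintype n] [DecidableEq n] (A : Matrix m n ℂ) : ℝ :=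
  ‖LinearMap.toContinuousLinearMap (Matrix.toEuclideanLin A)‖

/-- For `z ∈ ℂ³` and a `4×4` matrix `S = [[A,B],[C,D]]` in `2×2` block form
(with respect to `ℂ⁴ = ℂ² ⊕ ℂ²`), the matrix `z_S = [[z₁A, z₃B],[z₃C, z₂D]]`. -/
def zS (z : ℂ × ℂ × ℂ) (S : Matrix (Fin 4) (Fin 4) ℂ) : Matrix (Fin 4) (Fin 4) ℂ :=
  Matrix.of fun i j =>
    (if i.val < 2 then (if j.val < 2 then z.1 else z.2.2)
     else (if j.val < 2 then z.2.2 else z.2.1)) * S i j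

open Matrix
open scoped ComplexOrder

local notation "E4" => EuclideanSpace ℂ (Fin 4)

private lemma opNorm_mulVec_le {T : Matrix (Fin 4) (Fin 4) ℂ} (x : E4) :
    ‖((WithLp.equiv 2 _).symm (T *ᵥ (WithLp.equiv 2 _ x)) : E4)‖ ≤ opNorm T * ‖x‖ := by
  have h := (LinearMap.toContinuousLinearMap (Matrix.toEuclideanLin T)).le_opNorm x
  simpa [Matrix.toEuclideanLin_apply, opNorm] using h

private lemma exists_unitary_trace_max (N : Matrix (Fin 4) (Fin 4) ℂ) :
    ∃ U : Matrix (Fin 4) (Fin 4) ℂ, U ∈ Matrix.unitaryGroup (Fin 4) ℂ ∧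
      ∀ T : Matrix (Fin 4) (Fin 4) ℂ, opNorm T ≤ 1 →
        ((Nᴴ * T).trace).re ≤ ((Nᴴ * U).trace).re := by
  classical
  have hP : Matrix.PosSemidef (Nᴴ * N) := Matrix.posSemidef_conjTranspose_mul_self N
  have hH : (Nᴴ * N).IsHermitian := hP.isHermitian
  set d : Fin 4 → ℝ := hH.eigenvalues with hd_def
  have hd : ∀ i, 0 ≤ d i := hP.eigenvalues_nonneg
  set w : OrthonormalBasis (Fin 4) ℂ E4 := hH.eigenvectorBasis with hw_def
  have hwev : ∀ k, (Nᴴ * N) *ᵥ ⇑(w k) = d k • ⇑(w k) := hH.mulVec_eigenvectorBasis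
  have hwinner : ∀ k l, star ⇑(w k) ⬝ᵥ ⇑(w l) = if k = l then (1 : ℂ) else 0 := fun k l => by
    rw [dotProduct_comm]; exact orthonormal_iff_ite.mp w.orthonormal k l
  have key : ∀ k l, star (N *ᵥ ⇑(w k)) ⬝ᵥ (N *ᵥ ⇑(w l)) = if k = l then (d l : ℂ) else 0 := by
    intro k l
    have h1 : star (N *ᵥ ⇑(w k)) ⬝ᵥ (N *ᵥ ⇑(w l)) = star ⇑(w k) ⬝ᵥ ((Nᴴ * N) *ᵥ ⇑(w l)) := by
      rw [Matrix.star_mulVec, Matrix.dotProduct_mulVec, Matrix.vecMul_vecMul,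
        ← Matrix.dotProduct_mulVec]
    rw [h1, hwev l, dotProduct_smul, hwinner k l]
    by_cases h : k = l <;> simp [h, Complex.real_smul]
  set s : Set (Fin 4) := {i | d i ≠ 0} with hs_def
  set v₀ : Fin 4 → E4 := fun i =>
    (WithLp.equiv 2 _).symm (((Real.sqrt (d i) : ℂ))⁻¹ • (N *ᵥ ⇑(w i))) with hv0_def
  have hsqrt_ne : ∀ k, k ∈ s → (Real.sqrt (d k) : ℂ) ≠ 0 := by
    intro k hk
    have hdk : 0 < d k := lt_of_le_of_ne (hd k) (Ne.symm hk)
    exact Complex.ofReal_ne_zero.mpr (Real.sqrt_ne_zero'.mpr hdk)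
  have hv0inner : ∀ k l, (inner ℂ (v₀ k) (v₀ l) : ℂ) =
      ((Real.sqrt (d k) : ℂ))⁻¹ * ((Real.sqrt (d l) : ℂ))⁻¹ *
        (if k = l then (d l : ℂ) else 0) := by
    intro k l
    show (((Real.sqrt (d l) : ℂ))⁻¹ • (N *ᵥ ⇑(w l))) ⬝ᵥ
        star (((Real.sqrt (d k) : ℂ))⁻¹ • (N *ᵥ ⇑(w k))) = _
    rw [dotProduct_comm]
    rw [star_smul, smul_dotProduct, dotProduct_smul, key k l]
    simp only [smul_eq_mul, star_inv₀]
    rw [Complex.star_def, Complex.conj_ofReal]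
    ring
  have hv0on : Orthonormal ℂ (s.restrict v₀) := by
    rw [orthonormal_iff_ite]
    rintro ⟨k, hk⟩ ⟨l, hl⟩
    show (inner ℂ (v₀ k) (v₀ l) : ℂ) = _
    rw [hv0inner k l]
    simp only [Subtype.mk.injEq]
    by_cases h : k = l
    · subst h
      rw [if_pos rfl, if_pos rfl]
      have h2 : (Real.sqrt (d k) : ℂ) * (Real.sqrt (d k) : ℂ) = (d k : ℂ) := by
        rw [← Complex.ofReal_mul, Real.mul_self_sqrt (hd k)]
      rw [← h2]
      field_simp
      exact div_self (hsqrt_ne k hk)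
    · rw [if_neg h, if_neg h, mul_zero]
  obtain ⟨v, hv⟩ := hv0on.exists_orthonormalBasis_extension_of_card_eq (by simp)
  have hNw : ∀ k, N *ᵥ ⇑(w k) = (Real.sqrt (d k) : ℂ) • ⇑(v k) := by
    intro k
    by_cases hk : k ∈ s
    · rw [hv k hk]
      show N *ᵥ ⇑(w k) = (Real.sqrt (d k) : ℂ) • (((Real.sqrt (d k) : ℂ))⁻¹ • (N *ᵥ ⇑(w k)))
      rw [smul_smul, mul_inv_cancel₀ (hsqrt_ne k hk), one_smul]
    · have hk0 : d k = 0 := by simpa [hs_def] using hk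
      have h0 : N *ᵥ ⇑(w k) = 0 := by
        have h := key k k
        rw [if_pos rfl, hk0] at h
        exact dotProduct_star_self_eq_zero.mp (by simpa using h)
      rw [h0, hk0]
      simp
  -- matrices with columns w, v
  set W : Matrix (Fin 4) (Fin 4) ℂ := Matrix.of (fun i j => (w j : E4) i) with hW_def
  set V : Matrix (Fin 4) (Fin 4) ℂ := Matrix.of (fun i j => (v j : E4) i) with hV_def
  have hvinner : ∀ k l, star ⇑(v k) ⬝ᵥ ⇑(v l) = if k = l then (1 : ℂ) else 0 := fun k l => by
    rw [dotProduct_comm]; exact orthonormal_iff_ite.mp v.orthonormal k l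
  have hWU : star W * W = 1 := by
    ext k l
    have := hwinner k l
    simp only [Matrix.mul_apply, Matrix.star_apply, hW_def, Matrix.of_apply,
      Matrix.one_apply] at this ⊢
    convert this using 1
    rfl
  have hVU : star V * V = 1 := by
    ext k l
    have := hvinner k l
    simp only [Matrix.mul_apply, Matrix.star_apply, hV_def, Matrix.of_apply,
      Matrix.one_apply] at this ⊢
    convert this using 1
    rfl
  have hWmem : W ∈ Matrix.unitaryGroup (Fin 4) ℂ :=
    Matrix.mem_unitaryGroup_iff.mpr (mul_eq_one_comm.mp hWU)
  have hVmem : V ∈ Matrix.unitaryGroup (Fin 4) ℂ :=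
    Matrix.mem_unitaryGroup_iff.mpr (mul_eq_one_comm.mp hVU)
  set D : Matrix (Fin 4) (Fin 4) ℂ := Matrix.diagonal (fun k => (Real.sqrt (d k) : ℂ)) with hD_def
  have hNW : N * W = V * D := by
    ext i k
    have h1 : (N * W) i k = (N *ᵥ ⇑(w k)) i := by
      simp [hW_def, Matrix.mul_apply, Matrix.mulVec, dotProduct]
    rw [h1, hNw k]
    simp [hV_def, hD_def, Matrix.mul_diagonal, mul_comm]
  have hWW : W * star W = 1 := mul_eq_one_comm.mp hWU
  have hN : N = V * D * Wᴴ := by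
    have : N * (W * star W) = V * D * star W := by
      rw [← Matrix.mul_assoc, hNW]
    rw [hWW, Matrix.mul_one] at this
    rw [this, Matrix.star_eq_conjTranspose]
  refine ⟨V * Wᴴ, ?_, ?_⟩
  · rw [← Matrix.star_eq_conjTranspose]
    exact mul_mem hVmem (Unitary.star_mem hWmem)
  intro T hT
  -- trace at U
  have hDH : Dᴴ = D := by
    simp [hD_def, Matrix.diagonal_conjTranspose]
  have hWHW : Wᴴ * W = 1 := by rw [← Matrix.star_eq_conjTranspose]; exact hWU
  have hVHV : Vᴴ * V = 1 := by rw [← Matrix.star_eq_conjTranspose]; exact hVU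
  have hNH : Nᴴ = W * D * Vᴴ := by
    rw [hN, Matrix.conjTranspose_mul, Matrix.conjTranspose_mul, hDH,
      Matrix.conjTranspose_conjTranspose, Matrix.mul_assoc]
  have htrU : ((Nᴴ * (V * Wᴴ)).trace) = ∑ k, (Real.sqrt (d k) : ℂ) := by
    have e1 : Nᴴ * (V * Wᴴ) = W * (D * Wᴴ) := by
      rw [hNH, Matrix.mul_assoc (W * D) Vᴴ (V * Wᴴ), ← Matrix.mul_assoc Vᴴ V Wᴴ, hVHV,
        Matrix.one_mul, Matrix.mul_assoc]
    rw [e1, Matrix.trace_mul_comm, Matrix.mul_assoc, hWHW, Matrix.mul_one, hD_def,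
      Matrix.trace_diagonal]
  set B : Matrix (Fin 4) (Fin 4) ℂ := Vᴴ * (T * W) with hB_def
  have htrT : ((Nᴴ * T).trace) = ∑ k, (Real.sqrt (d k) : ℂ) * B k k := by
    have e2 : Nᴴ * T = W * (D * (Vᴴ * T)) := by
      rw [hNH, Matrix.mul_assoc, Matrix.mul_assoc]
    rw [e2, Matrix.trace_mul_comm]
    have e3 : D * (Vᴴ * T) * W = D * B := by
      rw [hB_def, Matrix.mul_assoc, Matrix.mul_assoc]
    rw [e3]
    simp [Matrix.trace, Matrix.diag, hD_def, Matrix.diagonal_mul]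
  have hBk : ∀ k, ‖B k k‖ ≤ 1 := by
    intro k
    have hBkk : B k k = inner ℂ (v k) ((WithLp.equiv 2 _).symm (T *ᵥ ⇑(w k)) : E4) := by
      show B k k = (T *ᵥ ⇑(w k)) ⬝ᵥ star ⇑(v k)
      simp [hB_def, Matrix.mul_apply, Matrix.star_apply, hV_def, hW_def, Matrix.mulVec,
        dotProduct, Finset.mul_sum, mul_comm, mul_left_comm]
    rw [hBkk]
    calc ‖(inner ℂ (v k) ((WithLp.equiv 2 _).symm (T *ᵥ ⇑(w k)) : E4) : ℂ)‖
        ≤ ‖v k‖ * ‖((WithLp.equiv 2 _).symm (T *ᵥ ⇑(w k)) : E4)‖ := norm_inner_le_norm _ _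
      _ ≤ 1 * (opNorm T * ‖w k‖) := by
          have h1 : ‖v k‖ = 1 := v.orthonormal.1 k
          have h2 := opNorm_mulVec_le (T := T) (w k)
          rw [h1]
          exact mul_le_mul_of_nonneg_left h2 zero_le_one
      _ ≤ 1 := by
          rw [one_mul, w.orthonormal.1 k, mul_one]
          exact hT
  calc ((Nᴴ * T).trace).re = ∑ k, ((Real.sqrt (d k) : ℂ) * B k k).re := by
        rw [htrT]; exact Complex.re_sum _ _
    _ ≤ ∑ k, Real.sqrt (d k) := by
        apply Finset.sum_le_sum
        intro k _
        rw [Complex.re_ofReal_mul]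
        have : (B k k).re ≤ 1 := le_trans (Complex.re_le_norm _) (by
          exact hBk k)
        calc Real.sqrt (d k) * (B k k).re ≤ Real.sqrt (d k) * 1 :=
              mul_le_mul_of_nonneg_left this (Real.sqrt_nonneg _)
          _ = Real.sqrt (d k) := mul_one _
    _ = ((Nᴴ * (V * Wᴴ)).trace).re := by
        rw [htrU]
        simp

private def wt (z : ℂ × ℂ × ℂ) (i j : Fin 4) : ℂ :=
  if i.val < 2 then (if j.val < 2 then z.1 else z.2.2)
  else (if j.val < 2 then z.2.2 else z.2.1)

private lemma zS_apply (z : ℂ × ℂ × ℂ) (S : Matrix (Fin 4) (Fin 4) ℂ) (i j : Fin 4) :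
    zS z S i j = wt z i j * S i j := rfl

private def zSlin (z : ℂ × ℂ × ℂ) :
    Matrix (Fin 4) (Fin 4) ℂ →ₗ[ℂ] Matrix (Fin 4) (Fin 4) ℂ where
  toFun := zS z
  map_add' S T := by ext i j; simp only [zS, Matrix.of_apply, Matrix.add_apply]; split_ifs <;> ring
  map_smul' c S := by ext i j; simp only [zS, Matrix.of_apply, Matrix.smul_apply, RingHom.id_apply, smul_eq_mul]; split_ifs <;> ring

private def Nmat (z : ℂ × ℂ × ℂ) (x y : E4) : Matrix (Fin 4) (Fin 4) ℂ :=
  Matrix.of fun i j => (y : E4) i * star (wt z i j) * star ((x : E4) j)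

private lemma trace_eq_inner (z : ℂ × ℂ × ℂ) (x y : E4) (T : Matrix (Fin 4) (Fin 4) ℂ) :
    (((Nmat z x y)ᴴ * T).trace) =
      (inner ℂ y (((WithLp.equiv 2 _).symm ((zS z T) *ᵥ (WithLp.equiv 2 _ x))) : E4) : ℂ) := by
  show _ = ((zS z T) *ᵥ ⇑x) ⬝ᵥ star ⇑y
  rw [dotProduct_comm]
  simp only [Matrix.trace, Matrix.diag, Matrix.mul_apply, Matrix.conjTranspose_apply,
    dotProduct, Matrix.mulVec, Nmat, Matrix.of_apply, zS_apply, Pi.star_apply,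
    Finset.mul_sum]
  rw [Finset.sum_comm]
  refine Finset.sum_congr rfl fun i _ => Finset.sum_congr rfl fun j _ => ?_
  simp only [StarMul.star_mul, star_star]
  show (x : E4) j * (wt z i j * star ((y : E4) i)) * T i j =
      star ((y : E4) i) * (wt z i j * T i j * (x : E4) j)
  ring

private lemma exists_unit_max (f : E4 →L[ℂ] E4) :
    ∃ x : E4, ‖x‖ = 1 ∧ ‖f x‖ = ‖f‖ := by
  obtain ⟨x, hx, hmax⟩ := (isCompact_sphere (0 : E4) 1).exists_isMaxOn
    (NormedSpace.sphere_nonempty.mpr zero_le_one)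
    (continuous_norm.comp f.continuous).continuousOn
  have hx1 : ‖x‖ = 1 := by simpa using mem_sphere_zero_iff_norm.mp hx
  refine ⟨x, hx1, le_antisymm (by simpa [hx1] using f.le_opNorm x) ?_⟩
  refine f.opNorm_le_bound (norm_nonneg _) fun y => ?_
  rcases eq_or_ne y 0 with rfl | hy
  · simp
  · have hyn : ‖y‖ ≠ 0 := norm_ne_zero_iff.mpr hy
    have hmem : ((‖y‖ : ℂ)⁻¹ • y) ∈ Metric.sphere (0 : E4) 1 := by
      simp [mem_sphere_zero_iff_norm, norm_smul, hyn]
    have h2 : ‖f ((‖y‖ : ℂ)⁻¹ • y)‖ ≤ ‖f x‖ := hmax hmem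
    have h3 : ‖f ((‖y‖ : ℂ)⁻¹ • y)‖ = ‖y‖⁻¹ * ‖f y‖ := by
      rw [_root_.map_smul, norm_smul]; simp
    rw [h3] at h2
    calc ‖f y‖ = ‖y‖ * (‖y‖⁻¹ * ‖f y‖) := by field_simp
    _ ≤ ‖y‖ * ‖f x‖ := mul_le_mul_of_nonneg_left h2 (norm_nonneg _)
    _ = ‖f x‖ * ‖y‖ := mul_comm _ _

open scoped Matrix.Norms.L2Operator

theorem stmt_12 (z : ℂ × ℂ × ℂ) :
    ∃ U : Matrix (Fin 4) (Fin 4) ℂ, U ∈ Matrix.unitaryGroup (Fin 4) ℂ ∧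
      ∀ T : Matrix (Fin 4) (Fin 4) ℂ, opNorm T ≤ 1 → opNorm (zS z T) ≤ opNorm (zS z U) := by
  classical
  have hnorm : ∀ A : Matrix (Fin 4) (Fin 4) ℂ, opNorm A = ‖A‖ := fun _ => rfl
  have hcont : Continuous fun T : Matrix (Fin 4) (Fin 4) ℂ => ‖zSlin z T‖ :=
    continuous_norm.comp (zSlin z).continuous_of_finiteDimensional
  obtain ⟨T0, hT0K, hT0max⟩ :=
    (isCompact_closedBall (0 : Matrix (Fin 4) (Fin 4) ℂ) 1).exists_isMaxOn
      ⟨0, Metric.mem_closedBall_self zero_le_one⟩ hcont.continuousOn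
  have hT0n : opNorm T0 ≤ 1 := by rw [hnorm]; exact mem_closedBall_zero_iff.mp hT0K
  have hmax : ∀ T, opNorm T ≤ 1 → opNorm (zS z T) ≤ opNorm (zS z T0) := by
    intro T hT
    have hmem : T ∈ Metric.closedBall (0 : Matrix (Fin 4) (Fin 4) ℂ) 1 :=
      mem_closedBall_zero_iff.mpr (by rw [← hnorm]; exact hT)
    exact hT0max hmem
  by_cases h0 : opNorm (zS z T0) = 0
  · refine ⟨1, Matrix.mem_unitaryGroup_iff.mpr (by simp), fun T hT => ?_⟩
    calc opNorm (zS z T) ≤ opNorm (zS z T0) := hmax T hT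
      _ = 0 := h0
      _ ≤ opNorm (zS z 1) := by rw [hnorm]; exact norm_nonneg _
  · set M := LinearMap.toContinuousLinearMap (Matrix.toEuclideanLin (zS z T0)) with hM_def
    obtain ⟨x, hx1, hxM⟩ := exists_unit_max M
    set r : ℝ := opNorm (zS z T0) with hr_def
    have hrn : 0 ≤ r := by rw [hr_def, hnorm]; exact norm_nonneg _
    have hr : 0 < r := lt_of_le_of_ne hrn (Ne.symm h0)
    have hMxr : ‖M x‖ = r := by rw [hxM]; rfl
    set y : E4 := ((r : ℂ))⁻¹ • M x with hy_def
    have hy1 : ‖y‖ = 1 := by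
      rw [hy_def, norm_smul, hMxr]
      have : ‖((r : ℂ))⁻¹‖ = r⁻¹ := by
        rw [norm_inv, Complex.norm_real, Real.norm_of_nonneg hr.le]
      rw [this]
      exact inv_mul_cancel₀ hr.ne'
    have hyMx : (inner ℂ y (M x) : ℂ) = (r : ℂ) := by
      rw [hy_def, inner_smul_left, inner_self_eq_norm_sq_to_K, hMxr, map_inv₀,
        Complex.conj_ofReal]
      have hne : (r : ℂ) ≠ 0 := Complex.ofReal_ne_zero.mpr hr.ne'
      field_simp
      simp
    obtain ⟨U, hU, hUmax⟩ := exists_unitary_trace_max (Nmat z x y)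
    refine ⟨U, hU, fun T hT => ?_⟩
    have htr0 : ((Nmat z x y)ᴴ * T0).trace = (r : ℂ) := by
      rw [trace_eq_inner]
      have heq : (((WithLp.equiv 2 _).symm ((zS z T0) *ᵥ (WithLp.equiv 2 _ x))) : E4) = M x := by
        rw [hM_def]
        rfl
      rw [heq]
      exact hyMx
    calc opNorm (zS z T) ≤ r := hmax T hT
      _ = (((Nmat z x y)ᴴ * T0).trace).re := by rw [htr0, Complex.ofReal_re]
      _ ≤ (((Nmat z x y)ᴴ * U).trace).re := hUmax T0 hT0n
      _ ≤ opNorm (zS z U) := by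
          rw [trace_eq_inner]
          have hle : ‖(inner ℂ y
              (((WithLp.equiv 2 _).symm ((zS z U) *ᵥ (WithLp.equiv 2 _ x))) : E4) : ℂ)‖ ≤
              opNorm (zS z U) := by
            calc ‖(inner ℂ y
                (((WithLp.equiv 2 _).symm ((zS z U) *ᵥ (WithLp.equiv 2 _ x))) : E4) : ℂ)‖
                ≤ ‖y‖ * ‖(((WithLp.equiv 2 _).symm ((zS z U) *ᵥ (WithLp.equiv 2 _ x))) : E4)‖ :=
                  norm_inner_le_norm _ _
              _ ≤ 1 * (opNorm (zS z U) * ‖x‖) := by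
                  rw [hy1]
                  exact mul_le_mul_of_nonneg_left (opNorm_mulVec_le x) zero_le_one
              _ = opNorm (zS z U) := by rw [hx1, one_mul, mul_one]
          exact le_trans (Complex.re_le_norm _) (by exact hle)
end
end

section
/- A 4×4 complex matrix written in 2×2 block form [[A, B], [C, D]] is unitary if and only if there exist unitary 2×2 matrices u, v, w and 2×2 matrices a, b, c, d such that a, b, c are positive semidefinite (Hermitian), the block matrix [[a, b], [c, d]] is unitary, and [[A, B], [C, D]] = [[u, 0], [0, v]] · [[a, b], [c, d]] · [[1, 0], [0, w]]. -/
open scoped ComplexOrder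

noncomputable section

open Matrix Filter Topology

namespace Stmt13Aux

variable {n : Type*} [Fintype n] [DecidableEq n]

instance : FirstCountableTopology (Matrix n n ℂ) :=
  inferInstanceAs (FirstCountableTopology (n → n → ℂ))

lemma isClosed_nonneg_complex : IsClosed {z : ℂ | 0 ≤ z} := by
  have h : {z : ℂ | 0 ≤ z} = Complex.re ⁻¹' Set.Ici 0 ∩ Complex.im ⁻¹' {0} := by
    ext z
    simp [Complex.le_def, eq_comm, Set.mem_Ici]
  rw [h]
  exact (isClosed_Ici.preimage Complex.continuous_re).inter
    (isClosed_singleton.preimage Complex.continuous_im)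

lemma posSemidef_of_tendsto {g : ℕ → Matrix n n ℂ} {L : Matrix n n ℂ}
    (hg : ∀ k, (g k).PosSemidef) (hL : Tendsto g atTop (𝓝 L)) : L.PosSemidef := by
  refine Matrix.PosSemidef.of_dotProduct_mulVec_nonneg ?_ ?_
  · have hct : Continuous fun N : Matrix n n ℂ => Nᴴ := continuous_id.matrix_conjTranspose
    have h1 : Tendsto (fun k => (g k)ᴴ) atTop (𝓝 Lᴴ) := (hct.tendsto L).comp hL
    have h2 : (fun k => (g k)ᴴ) = g := funext fun k => (hg k).1
    rw [h2] at h1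
    exact tendsto_nhds_unique h1 hL
  · intro x
    have hc : Continuous fun N : Matrix n n ℂ => dotProduct (star x) (N *ᵥ x) :=
      continuous_const.dotProduct (continuous_id.matrix_mulVec continuous_const)
    have h1 : Tendsto (fun k => dotProduct (star x) ((g k) *ᵥ x)) atTop
        (𝓝 (dotProduct (star x) (L *ᵥ x))) := (hc.tendsto L).comp hL
    exact isClosed_nonneg_complex.mem_of_tendsto h1
      (Eventually.of_forall fun k => (hg k).dotProduct_mulVec_nonneg x)

lemma isCompact_unitaryGroup :
    IsCompact ((Matrix.unitaryGroup n ℂ : Set (Matrix n n ℂ))) := by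
  have hK : IsCompact {M : Matrix n n ℂ | ∀ i j, M i j ∈ Metric.closedBall (0 : ℂ) 1} := by
    have h : IsCompact (Set.univ.pi fun _ : n => Set.univ.pi fun _ : n =>
        Metric.closedBall (0 : ℂ) 1) :=
      isCompact_univ_pi fun _ => isCompact_univ_pi fun _ => isCompact_closedBall _ _
    have heq : {M : Matrix n n ℂ | ∀ i j, M i j ∈ Metric.closedBall (0 : ℂ) 1} =
        (Set.univ.pi fun _ : n => Set.univ.pi fun _ : n => Metric.closedBall (0 : ℂ) 1) := by
      ext M
      constructor
      · exact fun hM i _ j _ => hM i j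
      · exact fun hM i j => hM i (Set.mem_univ i) j (Set.mem_univ j)
    rw [heq]
    exact h
  refine IsCompact.of_isClosed_subset hK ?_ ?_
  · have hset : ((Matrix.unitaryGroup n ℂ : Set (Matrix n n ℂ))) =
        (fun M : Matrix n n ℂ => star M * M) ⁻¹' {1} := by
      ext M
      simp only [Set.mem_preimage, Set.mem_singleton_iff, SetLike.mem_coe,
        Matrix.mem_unitaryGroup_iff']
    rw [hset]
    exact isClosed_singleton.preimage
      ((continuous_id.matrix_conjTranspose).matrix_mul continuous_id)
  · intro M hM i j
    have h1 : M * star M = 1 := Matrix.mem_unitaryGroup_iff.mp hM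
    have h2 : ∑ k, Complex.normSq (M i k) = 1 := by
      have h3 : (M * star M) i i = 1 := by rw [h1]; simp [Matrix.one_apply]
      have h4 : (M * star M) i i = ∑ k, (Complex.normSq (M i k) : ℂ) := by
        simp only [Matrix.mul_apply, Matrix.star_eq_conjTranspose, Matrix.conjTranspose_apply]
        exact Finset.sum_congr rfl fun k _ => by
          rw [Complex.star_def, Complex.mul_conj]
      rw [h4] at h3
      exact_mod_cast (by exact_mod_cast h3 :
        ((∑ k, Complex.normSq (M i k) : ℝ) : ℂ) = ((1 : ℝ) : ℂ))
    have h5 : Complex.normSq (M i j) ≤ 1 := by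
      rw [← h2]
      exact Finset.single_le_sum (fun k _ => Complex.normSq_nonneg _) (Finset.mem_univ j)
    simp only [Metric.mem_closedBall, dist_zero_right]
    have h6 : ‖M i j‖ ^ 2 = Complex.normSq (M i j) := by
      exact Complex.sq_norm _
    nlinarith [norm_nonneg (M i j)]

lemma exists_invertible_seq (M : Matrix n n ℂ) :
    ∃ f : ℕ → Matrix n n ℂ, (∀ k, IsUnit (f k).det) ∧ Tendsto f atTop (𝓝 M) := by
  have hp : (-M).charpoly ≠ 0 := ((-M).charpoly_monic).ne_zero
  have hfin : {t : ℂ | ((-M).charpoly).IsRoot t}.Finite := Polynomial.finite_setOf_isRoot hp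
  have heval : ∀ t : ℂ, ((-M).charpoly).eval t = (M + t • 1).det := by
    intro t
    rw [Matrix.charpoly, ← Polynomial.coe_evalRingHom, RingHom.map_det]
    congr 1
    ext i j
    by_cases h : i = j <;>
      simp [h, Matrix.charmatrix_apply, Matrix.diagonal_apply, Matrix.one_apply,
        Matrix.smul_apply, Matrix.add_apply, add_comm]
  have hinj : Function.Injective fun k : ℕ => ((k : ℂ) + 1)⁻¹ := by
    intro a b hab
    have h1 : ((a : ℂ) + 1) = (b : ℂ) + 1 := inv_injective hab
    have h2 : ((a : ℂ)) = (b : ℂ) := by linear_combination h1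
    exact_mod_cast h2
  have hbadfin : {k : ℕ | ((k : ℂ) + 1)⁻¹ ∈ {t : ℂ | ((-M).charpoly).IsRoot t}}.Finite :=
    hfin.preimage hinj.injOn
  obtain ⟨N, hN⟩ := hbadfin.bddAbove
  refine ⟨fun k => M + (((k + (N + 1) : ℕ) : ℂ) + 1)⁻¹ • 1, fun k => ?_, ?_⟩
  · rw [isUnit_iff_ne_zero]
    intro h0
    have hroot : ((-M).charpoly).IsRoot (((k + (N + 1) : ℕ) : ℂ) + 1)⁻¹ := by
      rw [Polynomial.IsRoot, heval]
      exact h0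
    have hmem : (k + (N + 1)) ∈
        {k : ℕ | ((k : ℂ) + 1)⁻¹ ∈ {t : ℂ | ((-M).charpoly).IsRoot t}} := hroot
    have := hN hmem
    omega
  · have h0 : Tendsto (fun k : ℕ => (((k + (N + 1) : ℕ) : ℂ) + 1)⁻¹) atTop (𝓝 0) := by
      rw [tendsto_zero_iff_norm_tendsto_zero]
      have h2 : ∀ k : ℕ, ‖(((k + (N + 1) : ℕ) : ℂ) + 1)⁻¹‖ = ((k : ℝ) + ((N : ℝ) + 2))⁻¹ := by
        intro k
        rw [norm_inv]
        congr 1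
        rw [show ((((k + (N + 1) : ℕ) : ℂ)) + 1) = (((k : ℝ) + ((N : ℝ) + 2) : ℝ) : ℂ) by
          push_cast; ring]
        rw [Complex.norm_real, Real.norm_eq_abs, abs_of_nonneg (by positivity)]
      simp only [h2]
      exact (tendsto_atTop_add_const_right atTop ((N : ℝ) + 2)
        tendsto_natCast_atTop_atTop).inv_tendsto_atTop
    have h3 := tendsto_const_nhds (x := M) (f := atTop (α := ℕ))
    have h4 := h3.add (h0.smul (tendsto_const_nhds (x := (1 : Matrix n n ℂ))))
    simpa using h4

open scoped MatrixOrder in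
lemma polar_isUnit {M : Matrix n n ℂ} (h : IsUnit M.det) :
    ∃ W ∈ Matrix.unitaryGroup n ℂ, (star W * M).PosSemidef := by
  have hP := Matrix.posSemidef_conjTranspose_mul_self M
  set P := CFC.sqrt (Mᴴ * M) with hPdef
  have hPsd : P.PosSemidef := (CFC.sqrt_nonneg _).posSemidef
  have hPP : P * P = Mᴴ * M := CFC.sqrt_mul_sqrt_self _ hP.nonneg
  have hdet : IsUnit P.det := by
    have h2 : IsUnit (Mᴴ * M).det := by
      rw [Matrix.det_mul, Matrix.det_conjTranspose]
      exact h.star.mul h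
    rw [← hPP, Matrix.det_mul] at h2
    exact isUnit_of_mul_isUnit_left h2
  have hstar : star (M * P⁻¹) = P⁻¹ * Mᴴ := by
    rw [Matrix.star_eq_conjTranspose, Matrix.conjTranspose_mul,
      Matrix.conjTranspose_nonsing_inv, hPsd.1]
  have hkey : star (M * P⁻¹) * M = P := by
    rw [hstar, Matrix.mul_assoc, ← hPP, ← Matrix.mul_assoc,
      Matrix.nonsing_inv_mul _ hdet, Matrix.one_mul]
  refine ⟨M * P⁻¹, ?_, ?_⟩
  · rw [Matrix.mem_unitaryGroup_iff']
    rw [hstar, Matrix.mul_assoc, ← Matrix.mul_assoc Mᴴ, ← hPP]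
    rw [show P⁻¹ * (P * P * P⁻¹) = P⁻¹ * P * (P * P⁻¹) by
      simp only [Matrix.mul_assoc]]
    rw [Matrix.nonsing_inv_mul _ hdet, Matrix.mul_nonsing_inv _ hdet, Matrix.one_mul]
  · rw [hkey]
    exact hPsd

set_option maxHeartbeats 1000000 in
theorem exists_polar (M : Matrix n n ℂ) :
    ∃ W ∈ Matrix.unitaryGroup n ℂ, (star W * M).PosSemidef := by
  obtain ⟨f, hfu, hfM⟩ := exists_invertible_seq M
  choose W hWmem hWpsd using fun k => polar_isUnit (hfu k)
  have hWmem' : ∀ k, W k ∈ (Matrix.unitaryGroup n ℂ : Set (Matrix n n ℂ)) := hWmem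
  obtain ⟨L, hLmem, φ, hφ, hconv⟩ := isCompact_unitaryGroup.tendsto_subseq hWmem'
  have hstar : Tendsto (fun k => star (W (φ k))) atTop (𝓝 (star L)) :=
    (continuous_star.tendsto L).comp hconv
  have hf : Tendsto (fun k => f (φ k)) atTop (𝓝 M) := hfM.comp hφ.tendsto_atTop
  have h1 : Tendsto (fun k => star (W (φ k)) * f (φ k)) atTop (𝓝 (star L * M)) :=
    hstar.mul hf
  exact ⟨L, hLmem, posSemidef_of_tendsto (fun k => hWpsd (φ k)) h1⟩

lemma diag_unitary {u v : Matrix n n ℂ} (hu : u ∈ Matrix.unitaryGroup n ℂ)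
    (hv : v ∈ Matrix.unitaryGroup n ℂ) :
    Matrix.fromBlocks u 0 0 v ∈ Matrix.unitaryGroup (n ⊕ n) ℂ := by
  have hu' : uᴴ * u = 1 := by
    rw [← Matrix.star_eq_conjTranspose]
    exact Matrix.mem_unitaryGroup_iff'.mp hu
  have hv' : vᴴ * v = 1 := by
    rw [← Matrix.star_eq_conjTranspose]
    exact Matrix.mem_unitaryGroup_iff'.mp hv
  rw [Matrix.mem_unitaryGroup_iff', Matrix.star_eq_conjTranspose,
    Matrix.fromBlocks_conjTranspose, Matrix.fromBlocks_multiply, ← Matrix.fromBlocks_one]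
  congr 1 <;>
    simp [hu', hv']

lemma cancel_left {g : Matrix n n ℂ} (hg : g ∈ Matrix.unitaryGroup n ℂ)
    (X : Matrix n n ℂ) : g * (star g * X) = X := by
  rw [← Matrix.mul_assoc, Matrix.mem_unitaryGroup_iff.mp hg, Matrix.one_mul]

end Stmt13Aux

open Stmt13Aux in
theorem stmt_13 (A B C D : Matrix (Fin 2) (Fin 2) ℂ) :
    Matrix.fromBlocks A B C D ∈ Matrix.unitaryGroup (Fin 2 ⊕ Fin 2) ℂ ↔
      ∃ u v w a b c d : Matrix (Fin 2) (Fin 2) ℂ,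
        u ∈ Matrix.unitaryGroup (Fin 2) ℂ ∧
        v ∈ Matrix.unitaryGroup (Fin 2) ℂ ∧
        w ∈ Matrix.unitaryGroup (Fin 2) ℂ ∧
        a.PosSemidef ∧ b.PosSemidef ∧ c.PosSemidef ∧
        Matrix.fromBlocks a b c d ∈ Matrix.unitaryGroup (Fin 2 ⊕ Fin 2) ℂ ∧
        Matrix.fromBlocks A B C D =
          Matrix.fromBlocks u 0 0 v * Matrix.fromBlocks a b c d * Matrix.fromBlocks 1 0 0 w := by
  constructor
  · intro hM
    obtain ⟨u, hu, hau⟩ := exists_polar A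
    obtain ⟨v, hv, hcv⟩ := exists_polar C
    obtain ⟨ω, hω, hbω⟩ := exists_polar (star u * B)ᴴ
    have hw : star ω ∈ Matrix.unitaryGroup (Fin 2) ℂ := Unitary.star_mem hω
    -- b is psd
    have hωstar : (star ω)ᴴ = ω := by rw [← Matrix.star_eq_conjTranspose, star_star]
    have hbX : (star u * B) * ω = star ω * (star u * B)ᴴ := by
      calc (star u * B) * ω = (star ω * (star u * B)ᴴ)ᴴ := by
            rw [Matrix.conjTranspose_mul, Matrix.conjTranspose_conjTranspose, hωstar]
        _ = star ω * (star u * B)ᴴ := hbω.1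
    have hbpsd : ((star u * B) * ω).PosSemidef := hbX ▸ hbω
    -- the four block identities
    have hA : u * (star u * A) = A := cancel_left hu A
    have hC : v * (star v * C) = C := cancel_left hv C
    have hB : u * ((star u * B) * ω) * star ω = B := by
      rw [show u * ((star u * B) * ω) * star ω = u * (star u * (B * (ω * star ω))) by
        simp only [Matrix.mul_assoc]]
      rw [Matrix.mem_unitaryGroup_iff.mp hω, Matrix.mul_one]
      exact cancel_left hu B
    have hD : v * ((star v * D) * ω) * star ω = D := by
      rw [show v * ((star v * D) * ω) * star ω = v * (star v * (D * (ω * star ω))) by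
        simp only [Matrix.mul_assoc]]
      rw [Matrix.mem_unitaryGroup_iff.mp hω, Matrix.mul_one]
      exact cancel_left hv D
    have heq : Matrix.fromBlocks A B C D =
        Matrix.fromBlocks u 0 0 v *
          Matrix.fromBlocks (star u * A) ((star u * B) * ω) (star v * C) ((star v * D) * ω) *
          Matrix.fromBlocks 1 0 0 (star ω) := by
      rw [Matrix.fromBlocks_multiply, Matrix.fromBlocks_multiply]
      simp only [Matrix.zero_mul, Matrix.mul_zero, Matrix.mul_one, add_zero, zero_add]
      rw [hA, hB, hC, hD]
    -- unitarity of middle factor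
    have h1 := diag_unitary hu hv
    have h2 := diag_unitary (one_mem (Matrix.unitaryGroup (Fin 2) ℂ)) hw
    have hXeq : Matrix.fromBlocks (star u * A) ((star u * B) * ω) (star v * C)
          ((star v * D) * ω) =
        star (Matrix.fromBlocks u 0 0 v) * Matrix.fromBlocks A B C D *
          star (Matrix.fromBlocks 1 0 0 (star ω)) := by
      conv_rhs => rw [heq]
      rw [show ∀ U1 X U2 : Matrix (Fin 2 ⊕ Fin 2) (Fin 2 ⊕ Fin 2) ℂ,
          star U1 * (U1 * X * U2) * star U2 = (star U1 * U1) * X * (U2 * star U2) from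
        fun U1 X U2 => by simp only [Matrix.mul_assoc]]
      rw [Matrix.mem_unitaryGroup_iff'.mp h1, Matrix.mem_unitaryGroup_iff.mp h2,
        Matrix.one_mul, Matrix.mul_one]
    have hXmem : Matrix.fromBlocks (star u * A) ((star u * B) * ω) (star v * C)
        ((star v * D) * ω) ∈ Matrix.unitaryGroup (Fin 2 ⊕ Fin 2) ℂ := by
      rw [hXeq]
      exact mul_mem (mul_mem (Unitary.star_mem h1) hM) (Unitary.star_mem h2)
    exact ⟨u, v, star ω, star u * A, (star u * B) * ω, star v * C, (star v * D) * ω,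
      hu, hv, hw, hau, hbpsd, hcv, hXmem, heq⟩
  · rintro ⟨u, v, w, a, b, c, d, hu, hv, hw, ha, hb, hc, hX, heq⟩
    rw [heq]
    exact mul_mem (mul_mem (diag_unitary hu hv) hX)
      (diag_unitary (one_mem (Matrix.unitaryGroup (Fin 2) ℂ)) hw)
end
end

section
/- Let z ∈ ℂ³ with |z₁| < 1, |z₂| < 1, |z₃| < 1, and for r ∈ [0,1] let z_r be the 2×2 matrix [[r·z₁, √(1−r²)·z₃], [√(1−r²)·z₃, −r·z₂]]. Then sup_{r∈[0,1]} ‖z_r‖ < 1 if and only if |z₁z₂ − z₃²| < (1 − |z₃|²) + √(1 − |z₁|²)·√(1 − |z₂|²), where ‖·‖ denotes the operator norm on ℂ². -/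
noncomputable section

/-- For `z ∈ ℂ³` and `r ∈ [0,1]`, the matrix
`z_r = [[r z₁, √(1-r²) z₃], [√(1-r²) z₃, -r z₂]]`. -/
def zr (z : ℂ × ℂ × ℂ) (r : ℝ) : Matrix (Fin 2) (Fin 2) ℂ :=
  Matrix.of
    ![![(r : ℂ) * z.1, (Real.sqrt (1 - r ^ 2) : ℂ) * z.2.2],
      ![(Real.sqrt (1 - r ^ 2) : ℂ) * z.2.2, -((r : ℂ) * z.2.1)]]

open Complex

section helpers

lemma quad_pos_iff (A B C D : ℝ) (hA : 0 < A) (hB : 0 < B) (hC : 0 < C) (hD : 0 ≤ D) :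
    (∀ t ∈ Set.Icc (0:ℝ) 1, 0 < D^2*t^2 + (A*B - C^2 - D^2)*t + C^2) ↔
      D < C + Real.sqrt (A*B) := by
  have hAB : (0:ℝ) < A*B := mul_pos hA hB
  have hS0 : 0 < Real.sqrt (A*B) := Real.sqrt_pos.mpr hAB
  have hS : Real.sqrt (A*B) ^ 2 = A*B := Real.sq_sqrt hAB.le
  set S := Real.sqrt (A*B) with hSdef
  constructor
  · intro h
    by_contra hcon
    push_neg at hcon
    have hDpos : 0 < D := lt_of_lt_of_le (by nlinarith) hcon
    have ht : C/D ∈ Set.Icc (0:ℝ) 1 := by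
      constructor
      · positivity
      · rw [div_le_one hDpos]; nlinarith
    have := h (C/D) ht
    have hft : D^2*(C/D)^2 + (A*B - C^2 - D^2)*(C/D) + C^2 = (C/D)*(A*B - (D-C)^2) := by
      field_simp
      ring
    rw [hft] at this
    have h1 : 0 < C/D := by positivity
    have h3 : A*B ≤ (D-C)^2 := by nlinarith
    have h4 : 0 < A*B - (D-C)^2 := (mul_pos_iff_of_pos_left h1).mp this
    linarith
  · intro h t ht
    obtain ⟨ht0, ht1⟩ := ht
    have key : D^2*t^2 + (A*B - C^2 - D^2)*t + C^2 = (D*t - C)^2 + t*(A*B - (D-C)^2) := by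
      ring
    rw [key]
    by_cases h2 : A*B ≤ (D-C)^2
    · have hDC : D - C ≤ -S := by nlinarith
      have hDt : D*t ≤ D := mul_le_of_le_one_right hD ht1
      have h7 : (C - D)^2 ≤ (C - D*t)^2 := by
        apply pow_le_pow_left₀ (by linarith) (by linarith)
      have h8 : 0 ≤ (1-t)*((D-C)^2 - A*B) :=
        mul_nonneg (by linarith) (by linarith)
      nlinarith [h7, h8, hAB]
    · push_neg at h2
      rcases eq_or_lt_of_le ht0 with h0 | h0
      · nlinarith
      · nlinarith [sq_nonneg (D*t - C), mul_pos h0 (by linarith : (0:ℝ) < A*B - (D-C)^2)]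

lemma form_pos_iff (α δ : ℝ) (γ : ℂ) (hα : 0 < α) :
    (∀ x₀ x₁ : ℂ, ¬(x₀ = 0 ∧ x₁ = 0) →
        0 < α * normSq x₀ + δ * normSq x₁ - 2*(γ * (starRingEnd ℂ) x₀ * x₁).re) ↔
      0 < α*δ - normSq γ := by
  constructor
  · intro h
    have := h γ (α:ℂ) (by rintro ⟨-, h2⟩; exact hα.ne' (by exact_mod_cast h2))
    have hre : (γ * (starRingEnd ℂ) γ * (α:ℂ)).re = normSq γ * α := by
      rw [Complex.mul_conj]
      simp [Complex.ofReal_mul]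
    rw [hre] at this
    have hns : normSq ((α:ℂ)) = α^2 := by
      simp [Complex.normSq_apply]; ring
    rw [hns] at this
    nlinarith [this]
  · intro h x₀ x₁ hx
    have key : α * (α * normSq x₀ + δ * normSq x₁ - 2*(γ * (starRingEnd ℂ) x₀ * x₁).re) =
        normSq ((α:ℂ)*x₀ - γ*x₁) + (α*δ - normSq γ) * normSq x₁ := by
      simp [Complex.normSq_apply, Complex.add_re, Complex.add_im, Complex.mul_re, Complex.mul_im,
        Complex.sub_re, Complex.sub_im, Complex.conj_re, Complex.conj_im]
      ring
    rcases eq_or_ne x₁ 0 with h1 | h1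
    · have h0 : x₀ ≠ 0 := by tauto
      have : 0 < α * (α * normSq x₀ + δ * normSq x₁ - 2*(γ * (starRingEnd ℂ) x₀ * x₁).re) := by
        rw [key, h1]
        simpa using mul_pos (mul_pos hα hα) (normSq_pos.mpr h0)
      nlinarith [this]
    · have : 0 < α * (α * normSq x₀ + δ * normSq x₁ - 2*(γ * (starRingEnd ℂ) x₀ * x₁).re) := by
        rw [key]
        have := mul_pos h (normSq_pos.mpr h1)
        nlinarith [normSq_nonneg ((α:ℂ)*x₀ - γ*x₁)]
      nlinarith [this]

lemma opNorm_lt_one_iff (M : Matrix (Fin 2) (Fin 2) ℂ) :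
    opNorm M < 1 ↔
      ∀ x : EuclideanSpace ℂ (Fin 2), x ≠ 0 → ‖Matrix.toEuclideanLin M x‖ < ‖x‖ := by
  set T := LinearMap.toContinuousLinearMap (Matrix.toEuclideanLin M) with hT
  have hTx : ∀ x, T x = Matrix.toEuclideanLin M x := fun x => rfl
  constructor
  · intro h x hx
    calc ‖Matrix.toEuclideanLin M x‖ = ‖T x‖ := by rw [hTx]
      _ ≤ ‖T‖ * ‖x‖ := T.le_opNorm x
      _ < 1 * ‖x‖ := by
          exact mul_lt_mul_of_pos_right h (norm_pos_iff.mpr hx)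
      _ = ‖x‖ := one_mul _
  · intro h
    obtain ⟨x₀, hx₀, hmax⟩ := (isCompact_sphere (0 : EuclideanSpace ℂ (Fin 2)) 1).exists_isMaxOn
      (NormedSpace.sphere_nonempty.mpr zero_le_one)
      (Continuous.norm (T.continuous.comp continuous_id)).continuousOn
    have hx₀n : ‖x₀‖ = 1 := by simpa using mem_sphere_iff_norm.mp hx₀
    have hTnorm : ‖T‖ ≤ ‖T x₀‖ := by
      apply ContinuousLinearMap.opNorm_le_bound _ (norm_nonneg _)
      intro y
      rcases eq_or_ne y 0 with rfl | hy
      · simp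
      · have hyn : (0:ℝ) < ‖y‖ := norm_pos_iff.mpr hy
        have hu : (‖y‖⁻¹ • y) ∈ Metric.sphere (0 : EuclideanSpace ℂ (Fin 2)) 1 := by
          simp [norm_smul, abs_of_pos (inv_pos.mpr hyn), inv_mul_cancel₀ hyn.ne']
        have := hmax hu
        simp only [Function.comp, id_eq, Set.mem_setOf_eq] at this
        have hTy : T (‖y‖⁻¹ • y) = ‖y‖⁻¹ • T y := T.map_smul_of_tower _ y
        rw [hTy, norm_smul] at this
        simp only [norm_inv, norm_norm] at this
        calc ‖T y‖ = ‖y‖ * (‖y‖⁻¹ * ‖T y‖) := by field_simp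
          _ ≤ ‖y‖ * ‖T x₀‖ := by
              apply mul_le_mul_of_nonneg_left _ hyn.le
              simpa using this
          _ = ‖T x₀‖ * ‖y‖ := mul_comm _ _
    have hx₀ne : x₀ ≠ 0 := by
      intro h0; rw [h0] at hx₀n; simp at hx₀n
    calc opNorm M = ‖T‖ := rfl
      _ ≤ ‖T x₀‖ := hTnorm
      _ < ‖x₀‖ := by rw [hTx]; exact h x₀ hx₀ne
      _ = 1 := hx₀n

lemma euclidean_norm_sq (v : EuclideanSpace ℂ (Fin 2)) :
    ‖v‖^2 = normSq (v 0) + normSq (v 1) := by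
  rw [EuclideanSpace.norm_eq, Real.sq_sqrt (by positivity)]
  simp [Fin.sum_univ_two, Complex.sq_norm]

lemma toEuclidean_comp (m k n : ℂ) (x : EuclideanSpace ℂ (Fin 2)) :
    Matrix.toEuclideanLin (Matrix.of ![![m,k],![k,n]]) x =
      (WithLp.equiv 2 (Fin 2 → ℂ)).symm ![m * x 0 + k * x 1, k * x 0 + n * x 1] := by
  rw [Matrix.toEuclideanLin_apply]
  congr 1
  funext i
  fin_cases i <;>
    simp [Matrix.mulVec, dotProduct, Fin.sum_univ_two]

lemma contraction_iff_form (m k n : ℂ) :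
    (∀ x : EuclideanSpace ℂ (Fin 2), x ≠ 0 →
        ‖Matrix.toEuclideanLin (Matrix.of ![![m,k],![k,n]]) x‖ < ‖x‖) ↔
      (∀ x₀ x₁ : ℂ, ¬(x₀ = 0 ∧ x₁ = 0) →
        0 < (1 - normSq m - normSq k) * normSq x₀ + (1 - normSq k - normSq n) * normSq x₁
            - 2*(((starRingEnd ℂ) m * k + (starRingEnd ℂ) k * n) * (starRingEnd ℂ) x₀ * x₁).re) := by
  have hMsq : ∀ x : EuclideanSpace ℂ (Fin 2),
      ‖Matrix.toEuclideanLin (Matrix.of ![![m,k],![k,n]]) x‖^2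
        = normSq (m * x 0 + k * x 1) + normSq (k * x 0 + n * x 1) := by
    intro x
    rw [toEuclidean_comp, euclidean_norm_sq]
    simp
  have hexpand : ∀ x₀ x₁ : ℂ,
      (normSq x₀ + normSq x₁) - (normSq (m*x₀ + k*x₁) + normSq (k*x₀ + n*x₁)) =
      (1 - normSq m - normSq k) * normSq x₀ + (1 - normSq k - normSq n) * normSq x₁
            - 2*(((starRingEnd ℂ) m * k + (starRingEnd ℂ) k * n) * (starRingEnd ℂ) x₀ * x₁).re := by
    intro x₀ x₁
    simp [Complex.normSq_apply, Complex.add_re, Complex.add_im, Complex.mul_re, Complex.mul_im,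
      Complex.conj_re, Complex.conj_im]
    ring
  constructor
  · intro h x₀ x₁ hx
    set x : EuclideanSpace ℂ (Fin 2) := (WithLp.equiv 2 (Fin 2 → ℂ)).symm ![x₀, x₁] with hxdef
    have hx0 : x 0 = x₀ := rfl
    have hx1 : x 1 = x₁ := rfl
    have hxne : x ≠ 0 := by
      intro h0
      apply hx
      constructor
      · rw [← hx0, h0]; rfl
      · rw [← hx1, h0]; rfl
    have hlt := h x hxne
    have hsq : ‖Matrix.toEuclideanLin (Matrix.of ![![m,k],![k,n]]) x‖^2 < ‖x‖^2 :=
      pow_lt_pow_left₀ hlt (norm_nonneg _) (by norm_num)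
    rw [hMsq, euclidean_norm_sq, hx0, hx1] at hsq
    rw [← hexpand]
    linarith
  · intro h x hxne
    have hx : ¬(x 0 = 0 ∧ x 1 = 0) := by
      rintro ⟨h0, h1⟩
      apply hxne
      apply PiLp.ext
      intro i
      fin_cases i <;> assumption
    have := h (x 0) (x 1) hx
    rw [← hexpand] at this
    have hsq : ‖Matrix.toEuclideanLin (Matrix.of ![![m,k],![k,n]]) x‖^2 < ‖x‖^2 := by
      rw [hMsq, euclidean_norm_sq]; linarith
    exact lt_of_pow_lt_pow_left₀ 2 (norm_nonneg _) hsq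

lemma key_identity (a b c : ℂ) (t : ℝ) :
    (1 - t*normSq a - (1-t)*normSq c) * (1 - t*normSq b - (1-t)*normSq c)
      - t*(1-t) * normSq ((starRingEnd ℂ) a * c - (starRingEnd ℂ) c * b)
    = normSq (a*b - c^2) * t^2
      + ((1-normSq a)*(1-normSq b) - (1-normSq c)^2 - normSq (a*b - c^2)) * t
      + (1-normSq c)^2 := by
  simp [Complex.normSq_apply, Complex.add_re, Complex.add_im, Complex.mul_re, Complex.mul_im,
    Complex.sub_re, Complex.sub_im, Complex.conj_re, Complex.conj_im, pow_two]
  ring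

lemma opNorm_zr_lt_one_iff (z : ℂ × ℂ × ℂ) (h₁ : normSq z.1 < 1) (h₂ : normSq z.2.1 < 1)
    (h₃ : normSq z.2.2 < 1) (r : ℝ) (hr : r ∈ Set.Icc (0:ℝ) 1) :
    opNorm (zr z r) < 1 ↔
      0 < normSq (z.1*z.2.1 - z.2.2^2) * (r^2)^2
        + ((1-normSq z.1)*(1-normSq z.2.1) - (1-normSq z.2.2)^2
            - normSq (z.1*z.2.1 - z.2.2^2)) * (r^2)
        + (1-normSq z.2.2)^2 := by
  obtain ⟨hr0, hr1⟩ := hr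
  set a := z.1; set b := z.2.1; set c := z.2.2
  set s : ℝ := Real.sqrt (1 - r^2) with hsdef
  have hs2 : s^2 = 1 - r^2 := Real.sq_sqrt (by nlinarith)
  set m : ℂ := (r : ℂ) * a
  set k : ℂ := (s : ℂ) * c
  set n : ℂ := -((r : ℂ) * b)
  have hzr : zr z r = Matrix.of ![![m,k],![k,n]] := rfl
  have hm : normSq m = r^2 * normSq a := by
    show normSq ((r:ℂ) * a) = _
    rw [Complex.normSq_mul, Complex.normSq_ofReal]; ring
  have hk : normSq k = (1-r^2) * normSq c := by
    show normSq ((s:ℂ) * c) = _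
    rw [Complex.normSq_mul, Complex.normSq_ofReal, show s * s = s^2 by ring, hs2]
  have hn : normSq n = r^2 * normSq b := by
    show normSq (-((r:ℂ) * b)) = _
    rw [Complex.normSq_neg, Complex.normSq_mul, Complex.normSq_ofReal]; ring
  have hγeq : (starRingEnd ℂ) m * k + (starRingEnd ℂ) k * n =
      ((r:ℂ) * (s:ℂ)) * ((starRingEnd ℂ) a * c - (starRingEnd ℂ) c * b) := by
    simp [m, k, n, map_mul, Complex.conj_ofReal]
    ring
  have hγ : normSq ((starRingEnd ℂ) m * k + (starRingEnd ℂ) k * n) =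
      r^2 * (1-r^2) * normSq ((starRingEnd ℂ) a * c - (starRingEnd ℂ) c * b) := by
    rw [hγeq, Complex.normSq_mul, Complex.normSq_mul, Complex.normSq_ofReal,
      Complex.normSq_ofReal]
    rw [show s * s = s^2 by ring, hs2]
    ring
  have hα : 0 < 1 - normSq m - normSq k := by
    rw [hm, hk]
    have hr2 : (0:ℝ) ≤ 1 - r^2 := by nlinarith
    rcases eq_or_lt_of_le (sq_nonneg r) with h0 | h0
    · rw [← h0]; nlinarith
    · nlinarith [mul_pos h0 (by linarith : (0:ℝ) < 1 - normSq a),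
        mul_nonneg hr2 (by linarith : (0:ℝ) ≤ 1 - normSq c)]
  rw [hzr, opNorm_lt_one_iff, contraction_iff_form, form_pos_iff _ _ _ hα]
  rw [hm, hk, hn, hγ]
  rw [show (1 - r^2*normSq a - (1-r^2)*normSq c) * (1 - (1-r^2)*normSq c - r^2*normSq b)
      - r^2*(1-r^2)*normSq ((starRingEnd ℂ) a * c - (starRingEnd ℂ) c * b)
    = (1 - r^2*normSq a - (1-r^2)*normSq c) * (1 - r^2*normSq b - (1-r^2)*normSq c)
      - r^2*(1-r^2)*normSq ((starRingEnd ℂ) a * c - (starRingEnd ℂ) c * b) by ring]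
  rw [key_identity a b c (r^2)]

end helpers

theorem stmt_14 (z : ℂ × ℂ × ℂ) (h₁ : ‖z.1‖ < 1) (h₂ : ‖z.2.1‖ < 1) (h₃ : ‖z.2.2‖ < 1) :
    sSup ((fun r => opNorm (zr z r)) '' Set.Icc (0 : ℝ) 1) < 1 ↔
      ‖z.1 * z.2.1 - z.2.2 ^ 2‖ <
        (1 - ‖z.2.2‖ ^ 2) + Real.sqrt (1 - ‖z.1‖ ^ 2) * Real.sqrt (1 - ‖z.2.1‖ ^ 2) := by
  have hsq : ∀ w : ℂ, normSq w = ‖w‖^2 := fun w => by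
    rw [← Complex.sq_norm]
  have hna : normSq z.1 < 1 := by rw [hsq]; nlinarith [norm_nonneg z.1]
  have hnb : normSq z.2.1 < 1 := by rw [hsq]; nlinarith [norm_nonneg z.2.1]
  have hnc : normSq z.2.2 < 1 := by rw [hsq]; nlinarith [norm_nonneg z.2.2]
  set A : ℝ := 1 - ‖z.1‖^2 with hAdef
  set B : ℝ := 1 - ‖z.2.1‖^2 with hBdef
  set C : ℝ := 1 - ‖z.2.2‖^2 with hCdef
  set D : ℝ := ‖z.1 * z.2.1 - z.2.2 ^ 2‖ with hDdef
  have hA0 : 0 < A := by rw [hAdef]; nlinarith [norm_nonneg z.1]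
  have hB0 : 0 < B := by rw [hBdef]; nlinarith [norm_nonneg z.2.1]
  have hC0 : 0 < C := by rw [hCdef]; nlinarith [norm_nonneg z.2.2]
  have hD0 : 0 ≤ D := norm_nonneg _
  have hquad := quad_pos_iff A B C D hA0 hB0 hC0 hD0
  have hF : ∀ t : ℝ, normSq (z.1*z.2.1 - z.2.2^2) * t^2
        + ((1-normSq z.1)*(1-normSq z.2.1) - (1-normSq z.2.2)^2
            - normSq (z.1*z.2.1 - z.2.2^2)) * t
        + (1-normSq z.2.2)^2
      = D^2*t^2 + (A*B - C^2 - D^2)*t + C^2 := by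
    intro t
    simp only [hsq]
    try ring
  have hiff : ∀ r ∈ Set.Icc (0:ℝ) 1, (opNorm (zr z r) < 1 ↔
      0 < D^2*(r^2)^2 + (A*B - C^2 - D^2)*(r^2) + C^2) := by
    intro r hr
    rw [opNorm_zr_lt_one_iff z hna hnb hnc r hr, hF (r^2)]
  have hcont : Continuous (fun r => opNorm (zr z r)) := by
    have h1 : Continuous (zr z) := by
      apply continuous_matrix
      intro i j
      fin_cases i <;> fin_cases j <;>
        simp only [zr, Matrix.of_apply, Fin.zero_eta, Fin.mk_one, Matrix.cons_val',
          Matrix.cons_val_zero, Matrix.cons_val_one, Matrix.head_cons, Matrix.empty_val',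
          Matrix.cons_val_fin_one, Matrix.head_fin_const] <;> fun_prop
    have hlin : Continuous (fun M : Matrix (Fin 2) (Fin 2) ℂ =>
        LinearMap.toContinuousLinearMap (Matrix.toEuclideanLin M)) := by
      let e : Matrix (Fin 2) (Fin 2) ℂ →ₗ[ℂ]
          (EuclideanSpace ℂ (Fin 2) →L[ℂ] EuclideanSpace ℂ (Fin 2)) :=
        (Matrix.toEuclideanLin.trans LinearMap.toContinuousLinearMap).toLinearMap
      exact e.continuous_of_finiteDimensional
    exact (hlin.norm).comp h1
  set K := (fun r => opNorm (zr z r)) '' Set.Icc (0 : ℝ) 1 with hKdef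
  have hKne : K.Nonempty :=
    ⟨_, Set.mem_image_of_mem _ (Set.left_mem_Icc.mpr zero_le_one)⟩
  have hKcomp : IsCompact K := isCompact_Icc.image hcont
  have hmem : sSup K ∈ K := hKcomp.sSup_mem hKne
  constructor
  · intro h
    have hall : ∀ t ∈ Set.Icc (0:ℝ) 1, 0 < D^2*t^2 + (A*B - C^2 - D^2)*t + C^2 := by
      intro t ht
      set r : ℝ := Real.sqrt t with hrdef
      have hr : r ∈ Set.Icc (0:ℝ) 1 :=
        ⟨Real.sqrt_nonneg t, Real.sqrt_le_one.mpr ht.2⟩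
      have hfr : opNorm (zr z r) < 1 :=
        lt_of_le_of_lt (le_csSup hKcomp.bddAbove ⟨r, hr, rfl⟩) h
      rw [hiff r hr] at hfr
      rwa [hrdef, Real.sq_sqrt ht.1] at hfr
    have := hquad.mp hall
    rwa [Real.sqrt_mul hA0.le] at this
  · intro h
    obtain ⟨r₀, hr₀, hfr₀⟩ := hmem
    rw [← hfr₀, hiff r₀ hr₀]
    apply hquad.mpr _ (r₀^2) ⟨sq_nonneg r₀, pow_le_one₀ hr₀.1 hr₀.2⟩
    rwa [Real.sqrt_mul hA0.le]
end
end

section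
/- The set 𝒢 = {z ∈ ℂ³ : |z₁| < 1, |z₂| < 1, |z₃| < 1, and |z₁z₂ − z₃²| < (1 − |z₃|²) + √(1 − |z₁|²)·√(1 − |z₂|²)} is a convex subset of ℂ³ (viewed as a real vector space). -/
open Metric

noncomputable section

set_option maxHeartbeats 1000000

/-- The open unit disc in `ℂ`. -/
def uD : Set ℂ := Metric.ball (0 : ℂ) 1

/-- The open unit tridisc `𝔻³` in `ℂ³`. -/
def triD : Set (ℂ × ℂ × ℂ) := {z | z.1 ∈ uD ∧ z.2.1 ∈ uD ∧ z.2.2 ∈ uD}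

/-- The domain `𝒢 = {z ∈ 𝔻³ : |z₁z₂ - z₃²| < (1-|z₃|²) + √(1-|z₁|²)√(1-|z₂|²)}`. -/
def calG : Set (ℂ × ℂ × ℂ) :=
  {z | z ∈ triD ∧
    ‖z.1 * z.2.1 - z.2.2 ^ 2‖ <
      (1 - ‖z.2.2‖ ^ 2) + Real.sqrt (1 - ‖z.1‖ ^ 2) * Real.sqrt (1 - ‖z.2.1‖ ^ 2)}

lemma key_cs (x1 x2 x3 y1 y2 y3 s0 t0 : ℝ) (hs0 : 0 ≤ s0) (ht0 : 0 ≤ t0) :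
    0 ≤ s0*t0*(x1*y1 - x2*y2 - x3*y3)
      + t0^2*(x1^2+x2^2+x3^2)/2 + s0^2*(y1^2+y2^2+y3^2)/2 := by
  set R : ℝ := x1*y1 - x2*y2 - x3*y3 with hR
  set p : ℝ := x1^2+x2^2+x3^2 with hp
  set q : ℝ := y1^2+y2^2+y3^2 with hq
  have hp0 : 0 ≤ p := by positivity
  have hq0 : 0 ≤ q := by positivity
  have hCS : R^2 ≤ p*q := by
    have : p*q - R^2 = (x1*y2+x2*y1)^2 + (x1*y3+x3*y1)^2 + (x2*y3-x3*y2)^2 := by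
      rw [hR, hp, hq]; ring
    nlinarith [sq_nonneg (x1*y2+x2*y1), sq_nonneg (x1*y3+x3*y1), sq_nonneg (x2*y3-x3*y2)]
  have h5 : -R ≤ Real.sqrt p * Real.sqrt q := by
    have h6 : |R| = Real.sqrt (R^2) := (Real.sqrt_sq_eq_abs R).symm
    have h7 : Real.sqrt (R^2) ≤ Real.sqrt (p*q) := Real.sqrt_le_sqrt hCS
    rw [Real.sqrt_mul hp0] at h7
    have := neg_le_abs R
    linarith
  have h8 : 2*(s0*t0)*(Real.sqrt p * Real.sqrt q) ≤ t0^2*p + s0^2*q := by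
    have e1 : Real.sqrt p ^ 2 = p := Real.sq_sqrt hp0
    have e2 : Real.sqrt q ^ 2 = q := Real.sq_sqrt hq0
    nlinarith [sq_nonneg (t0*Real.sqrt p - s0*Real.sqrt q)]
  have h10 := mul_le_mul_of_nonneg_left h5 (mul_nonneg hs0 ht0)
  clear_value R p q
  nlinarith [h8, h10]

lemma key_real (a1 a2 s b1 b2 t c1 c2 s0 d1 d2 t0 : ℝ)
    (h1 : a1^2 + a2^2 + s^2 = 1) (h2 : b1^2 + b2^2 + t^2 = 1)
    (h3 : c1^2 + c2^2 + s0^2 = 1) (h4 : d1^2 + d2^2 + t0^2 = 1)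
    (hs0 : 0 ≤ s0) (ht0 : 0 ≤ t0) :
    s0*t0*((a1*d1 - a2*d2) + (c1*b1 - c2*b2) - (c1*d1 - c2*d2))
      + t0^2*(c1*a1 + c2*a2) + s0^2*(d1*b1 + d2*b2)
      - (1 - (c1^2 + c2^2)*(d1^2 + d2^2))
    ≤ s0*t0*((a1*b1 - a2*b2) - s*t) := by
  have h9 := key_cs (a1-c1) (a2-c2) (s-s0) (b1-d1) (b2-d2) (t-t0) s0 t0 hs0 ht0
  have hE : s0*t0*((a1*b1 - a2*b2) - s*t)
      - (s0*t0*((a1*d1 - a2*d2) + (c1*b1 - c2*b2) - (c1*d1 - c2*d2))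
        + t0^2*(c1*a1 + c2*a2) + s0^2*(d1*b1 + d2*b2)
        - (1 - (c1^2 + c2^2)*(d1^2 + d2^2)))
      = s0*t0*((a1-c1)*(b1-d1) - (a2-c2)*(b2-d2) - (s-s0)*(t-t0))
        + t0^2*((a1-c1)^2+(a2-c2)^2+(s-s0)^2)/2 + s0^2*((b1-d1)^2+(b2-d2)^2+(t-t0)^2)/2 := by
    linear_combination (-(t0^2)/2)*h1 + (-(s0^2)/2)*h2 + (-(d1^2+d2^2+1)/2)*h3
      + (-(c1^2+c2^2+1)/2)*h4
  linarith

lemma key2 (a1 a2 b1 b2 a1' a2' b1' b2' s t s' t' s0 t0 t1 t2 : ℝ)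
    (h1 : a1^2 + a2^2 + s^2 = 1) (h2 : b1^2 + b2^2 + t^2 = 1)
    (h1' : a1'^2 + a2'^2 + s'^2 = 1) (h2' : b1'^2 + b2'^2 + t'^2 = 1)
    (h3 : (t1*a1+t2*a1')^2 + (t1*a2+t2*a2')^2 + s0^2 = 1)
    (h4 : (t1*b1+t2*b1')^2 + (t1*b2+t2*b2')^2 + t0^2 = 1)
    (hs0 : 0 < s0) (ht0 : 0 < t0) (ht1 : 0 ≤ t1) (ht2 : 0 ≤ t2) (htt : t1 + t2 = 1) :
    ((t1*a1+t2*a1')*(t1*b1+t2*b1') - (t1*a2+t2*a2')*(t1*b2+t2*b2')) - s0*t0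
      ≤ t1*((a1*b1 - a2*b2) - s*t) + t2*((a1'*b1' - a2'*b2') - s'*t') := by
  set c1 : ℝ := t1*a1+t2*a1' with hc1
  set c2 : ℝ := t1*a2+t2*a2' with hc2
  set d1 : ℝ := t1*b1+t2*b1' with hd1
  set d2 : ℝ := t1*b2+t2*b2' with hd2
  have K1 := key_real a1 a2 s b1 b2 t c1 c2 s0 d1 d2 t0 h1 h2 h3 h4 hs0.le ht0.le
  have K2 := key_real a1' a2' s' b1' b2' t' c1 c2 s0 d1 d2 t0 h1' h2' h3 h4 hs0.le ht0.le
  have hcomb : t1*(s0*t0*((a1*d1 - a2*d2) + (c1*b1 - c2*b2) - (c1*d1 - c2*d2))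
        + t0^2*(c1*a1 + c2*a2) + s0^2*(d1*b1 + d2*b2)
        - (1 - (c1^2 + c2^2)*(d1^2 + d2^2)))
      + t2*(s0*t0*((a1'*d1 - a2'*d2) + (c1*b1' - c2*b2') - (c1*d1 - c2*d2))
        + t0^2*(c1*a1' + c2*a2') + s0^2*(d1*b1' + d2*b2')
        - (1 - (c1^2 + c2^2)*(d1^2 + d2^2)))
      = s0*t0*((c1*d1 - c2*d2) - s0*t0) := by
    rw [hc1, hc2, hd1, hd2]
    linear_combination (((t1*b1+t2*b1')^2+(t1*b2+t2*b2')^2) + t0^2)*h3 + h4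
      + (-s0*t0*((t1*a1+t2*a1')*(t1*b1+t2*b1') - (t1*a2+t2*a2')*(t1*b2+t2*b2')) - 1
        + ((t1*a1+t2*a1')^2+(t1*a2+t2*a2')^2)*((t1*b1+t2*b1')^2+(t1*b2+t2*b2')^2))*htt
  have K1' := mul_le_mul_of_nonneg_left K1 ht1
  have K2' := mul_le_mul_of_nonneg_left K2 ht2
  clear_value c1 c2 d1 d2
  have hfin : (s0*t0)*(((c1*d1 - c2*d2)) - s0*t0)
      ≤ (s0*t0)*(t1*((a1*b1 - a2*b2) - s*t) + t2*((a1'*b1' - a2'*b2') - s'*t')) := by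
    linarith [K1', K2', hcomb]
  exact le_of_mul_le_mul_left hfin (mul_pos hs0 ht0)

lemma normsq_decomp (x : ℂ) : ‖x‖^2 = x.re^2 + x.im^2 := by
  rw [Complex.sq_norm, Complex.normSq_apply]; ring

lemma hemisphere (x : ℂ) (h : ‖x‖ ≤ 1) :
    x.re^2 + x.im^2 + (Real.sqrt (1 - ‖x‖^2))^2 = 1 := by
  have h0 : (0:ℝ) ≤ 1 - ‖x‖^2 := by nlinarith [norm_nonneg x]
  rw [Real.sq_sqrt h0, ← normsq_decomp]; ring

lemma combo_lt (x y t1 t2 : ℝ) (hx : x < 1) (hy : y < 1)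
    (ht1 : 0 ≤ t1) (ht2 : 0 ≤ t2) (htt : t1 + t2 = 1) : t1*x + t2*y < 1 := by
  rcases eq_or_lt_of_le ht1 with h | h
  · have : t2 = 1 := by linarith
    rw [← h, this]; linarith
  · nlinarith [mul_lt_mul_of_pos_left hx h, mul_le_mul_of_nonneg_left hy.le ht2]

lemma id1 (ρ x y u : ℂ) (hρ : ‖ρ‖ = 1) :
    (ρ*x).re*(ρ*y).re - (ρ*x).im*(ρ*y).im + 2*(ρ*u).im^2
      = (ρ^2*(x*y - u^2)).re + ‖u‖^2 := by
  have h : ‖u‖^2 = (ρ*u).re^2 + (ρ*u).im^2 := by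
    rw [← one_mul ‖u‖, ← hρ, ← norm_mul, normsq_decomp]
  rw [h]
  simp only [Complex.mul_re, Complex.mul_im, Complex.sub_re, Complex.sub_im, pow_two,
    Complex.add_re, Complex.add_im]
  ring

lemma keyCC (A B A' B' C D : ℂ) (t1 t2 : ℝ)
    (hA : ‖A‖ ≤ 1) (hB : ‖B‖ ≤ 1) (hA' : ‖A'‖ ≤ 1) (hB' : ‖B'‖ ≤ 1)
    (hC : ‖C‖ < 1) (hD : ‖D‖ < 1)
    (hCdef : C = ↑t1*A + ↑t2*A') (hDdef : D = ↑t1*B + ↑t2*B')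
    (ht1 : 0 ≤ t1) (ht2 : 0 ≤ t2) (htt : t1 + t2 = 1) :
    (C.re*D.re - C.im*D.im) - Real.sqrt (1-‖C‖^2) * Real.sqrt (1-‖D‖^2)
      ≤ t1*((A.re*B.re - A.im*B.im) - Real.sqrt (1-‖A‖^2) * Real.sqrt (1-‖B‖^2))
        + t2*((A'.re*B'.re - A'.im*B'.im) - Real.sqrt (1-‖A'‖^2) * Real.sqrt (1-‖B'‖^2)) := by
  have hCre : C.re = t1*A.re + t2*A'.re := by
    rw [hCdef]; simp [Complex.add_re, Complex.mul_re]
  have hCim : C.im = t1*A.im + t2*A'.im := by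
    rw [hCdef]; simp [Complex.add_im, Complex.mul_im]
  have hDre : D.re = t1*B.re + t2*B'.re := by
    rw [hDdef]; simp [Complex.add_re, Complex.mul_re]
  have hDim : D.im = t1*B.im + t2*B'.im := by
    rw [hDdef]; simp [Complex.add_im, Complex.mul_im]
  have h3 := hemisphere C hC.le
  have h4 := hemisphere D hD.le
  rw [hCre, hCim] at h3
  rw [hDre, hDim] at h4
  have hs0 : 0 < Real.sqrt (1-‖C‖^2) := Real.sqrt_pos.mpr (by nlinarith [norm_nonneg C])
  have ht0 : 0 < Real.sqrt (1-‖D‖^2) := Real.sqrt_pos.mpr (by nlinarith [norm_nonneg D])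
  have K := key2 A.re A.im B.re B.im A'.re A'.im B'.re B'.im
    (Real.sqrt (1-‖A‖^2)) (Real.sqrt (1-‖B‖^2)) (Real.sqrt (1-‖A'‖^2)) (Real.sqrt (1-‖B'‖^2))
    (Real.sqrt (1-‖C‖^2)) (Real.sqrt (1-‖D‖^2)) t1 t2
    (hemisphere A hA) (hemisphere B hB) (hemisphere A' hA') (hemisphere B' hB')
    h3 h4 hs0 ht0 ht1 ht2 htt
  rw [← hCre, ← hCim, ← hDre, ← hDim] at K
  exact K

lemma phase (v : ℂ) : ∃ ρ : ℂ, ‖ρ‖ = 1 ∧ ρ^2 * v = ((‖v‖ : ℝ) : ℂ) := by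
  refine ⟨Complex.exp ((↑(-(v.arg)/2) : ℂ) * Complex.I), ?_, ?_⟩
  · exact_mod_cast Complex.norm_exp_ofReal_mul_I _
  · have h := Complex.norm_mul_exp_arg_mul_I v
    have hE2 : Complex.exp ((↑(-(v.arg)/2) : ℂ) * Complex.I)^2
        * Complex.exp ((v.arg : ℂ)*Complex.I) = 1 := by
      rw [sq, ← Complex.exp_add, ← Complex.exp_add, ← Complex.exp_zero]
      congr 1
      push_cast
      ring
    calc Complex.exp ((↑(-(v.arg)/2) : ℂ) * Complex.I)^2 * v
        = Complex.exp ((↑(-(v.arg)/2) : ℂ) * Complex.I)^2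
            * (↑‖v‖ * Complex.exp ((v.arg : ℂ)*Complex.I)) := by rw [h]
      _ = ↑‖v‖ * (Complex.exp ((↑(-(v.arg)/2) : ℂ) * Complex.I)^2
            * Complex.exp ((v.arg : ℂ)*Complex.I)) := by ring
      _ = ((‖v‖ : ℝ) : ℂ) := by rw [hE2, mul_one]

theorem stmt_15 : Convex ℝ calG := by
  intro z hz w hw t1 t2 ht1 ht2 htt
  obtain ⟨⟨hz1, hz2, hz3⟩, hzG⟩ := hz
  obtain ⟨⟨hw1, hw2, hw3⟩, hwG⟩ := hw
  rw [uD, mem_ball_zero_iff] at hz1 hz2 hz3 hw1 hw2 hw3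
  set m1 : ℂ := (t1:ℂ)*z.1 + (t2:ℂ)*w.1 with hm1
  set m2 : ℂ := (t1:ℂ)*z.2.1 + (t2:ℂ)*w.2.1 with hm2
  set m3 : ℂ := (t1:ℂ)*z.2.2 + (t2:ℂ)*w.2.2 with hm3
  have hcomp : t1 • z + t2 • w = (m1, m2, m3) := by
    rw [hm1, hm2, hm3]
    simp [Prod.ext_iff, Complex.real_smul]
  rw [hcomp]
  -- norm bounds
  have normbound : ∀ a b : ℂ, ‖a‖ < 1 → ‖b‖ < 1 → ‖(t1:ℂ)*a + (t2:ℂ)*b‖ < 1 := by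
    intro a b ha hb
    have h1 : ‖(t1:ℂ)*a + (t2:ℂ)*b‖ ≤ t1*‖a‖ + t2*‖b‖ := by
      calc ‖(t1:ℂ)*a + (t2:ℂ)*b‖ ≤ ‖(t1:ℂ)*a‖ + ‖(t2:ℂ)*b‖ := norm_add_le _ _
        _ = t1*‖a‖ + t2*‖b‖ := by
            rw [norm_mul, norm_mul, Complex.norm_real, Complex.norm_real,
              Real.norm_of_nonneg ht1, Real.norm_of_nonneg ht2]
    exact lt_of_le_of_lt h1 (combo_lt _ _ _ _ ha hb ht1 ht2 htt)
  have hn1 : ‖m1‖ < 1 := normbound _ _ hz1 hw1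
  have hn2 : ‖m2‖ < 1 := normbound _ _ hz2 hw2
  have hn3 : ‖m3‖ < 1 := normbound _ _ hz3 hw3
  refine ⟨⟨?_, ?_, ?_⟩, ?_⟩
  · exact mem_ball_zero_iff.mpr hn1
  · exact mem_ball_zero_iff.mpr hn2
  · exact mem_ball_zero_iff.mpr hn3
  -- main inequality
  obtain ⟨ρ, hρ, hρv⟩ := phase (m1*m2 - m3^2)
  have hnormρ : ∀ x : ℂ, ‖ρ*x‖ = ‖x‖ := by
    intro x; rw [norm_mul, hρ, one_mul]
  -- convexity pieces
  have KC := keyCC (ρ*z.1) (ρ*z.2.1) (ρ*w.1) (ρ*w.2.1) (ρ*m1) (ρ*m2) t1 t2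
    (by rw [hnormρ]; exact hz1.le) (by rw [hnormρ]; exact hz2.le)
    (by rw [hnormρ]; exact hw1.le) (by rw [hnormρ]; exact hw2.le)
    (by rw [hnormρ]; exact hn1) (by rw [hnormρ]; exact hn2)
    (by rw [hm1]; ring) (by rw [hm2]; ring) ht1 ht2 htt
  simp only [hnormρ] at KC
  have him : (ρ*m3).im = t1*(ρ*z.2.2).im + t2*(ρ*w.2.2).im := by
    have : ρ*m3 = (t1:ℂ)*(ρ*z.2.2) + (t2:ℂ)*(ρ*w.2.2) := by rw [hm3]; ring
    rw [this]
    simp [Complex.add_im, Complex.mul_im]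
  have hsqc : (ρ*m3).im^2 ≤ t1*(ρ*z.2.2).im^2 + t2*(ρ*w.2.2).im^2 := by
    rw [him]
    nlinarith [mul_nonneg (mul_nonneg ht1 ht2) (sq_nonneg ((ρ*z.2.2).im - (ρ*w.2.2).im))]
  -- pointwise bounds at z and w
  have rebound : ∀ x : ℂ, (ρ^2*x).re ≤ ‖x‖ := by
    intro x
    have h := Complex.re_le_norm (ρ^2*x)
    rwa [norm_mul, norm_pow, hρ, one_pow, one_mul] at h
  have Bz : ((ρ*z.1).re*(ρ*z.2.1).re - (ρ*z.1).im*(ρ*z.2.1).im) + 2*(ρ*z.2.2).im^2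
      - Real.sqrt (1-‖z.1‖^2) * Real.sqrt (1-‖z.2.1‖^2) < 1 := by
    have hid := id1 ρ z.1 z.2.1 z.2.2 hρ
    have hb := rebound (z.1*z.2.1 - z.2.2^2)
    have := hzG
    linarith
  have Bw : ((ρ*w.1).re*(ρ*w.2.1).re - (ρ*w.1).im*(ρ*w.2.1).im) + 2*(ρ*w.2.2).im^2
      - Real.sqrt (1-‖w.1‖^2) * Real.sqrt (1-‖w.2.1‖^2) < 1 := by
    have hid := id1 ρ w.1 w.2.1 w.2.2 hρ
    have hb := rebound (w.1*w.2.1 - w.2.2^2)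
    have := hwG
    linarith
  -- equality at m
  have Em : ((ρ*m1).re*(ρ*m2).re - (ρ*m1).im*(ρ*m2).im) + 2*(ρ*m3).im^2
      = ‖m1*m2 - m3^2‖ + ‖m3‖^2 := by
    have hid := id1 ρ m1 m2 m3 hρ
    have : (ρ^2*(m1*m2 - m3^2)).re = ‖m1*m2 - m3^2‖ := by
      rw [hρv, Complex.ofReal_re]
    linarith
  -- combine
  have hfin : ‖m1*m2 - m3^2‖ + ‖m3‖^2 - Real.sqrt (1-‖m1‖^2) * Real.sqrt (1-‖m2‖^2) < 1 := by
    have hc := combo_lt _ _ _ _ Bz Bw ht1 ht2 htt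
    nlinarith [KC, hsqc, Em]
  show ‖m1*m2 - m3^2‖ < (1 - ‖m3‖^2) + Real.sqrt (1-‖m1‖^2) * Real.sqrt (1-‖m2‖^2)
  linarith
end
end

section
/- Let G ⊆ ℂ³ be open with 0 ∈ G, and let F and ψ be holomorphic functions on G such that F(z) = ψ(z) for every z ∈ G with z₃² = z₁z₂. Then the derivatives of F and ψ at 0 coincide: DF(0) = Dψ(0). -/
noncomputable section

theorem stmt_17 (G : Set (ℂ × ℂ × ℂ)) (hG : IsOpen G) (h0 : (0 : ℂ × ℂ × ℂ) ∈ G)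
    (F ψ : ℂ × ℂ × ℂ → ℂ)
    (hF : DifferentiableOn ℂ F G) (hψ : DifferentiableOn ℂ ψ G)
    (heq : ∀ z ∈ G, z.2.2 ^ 2 = z.1 * z.2.1 → F z = ψ z) :
    fderiv ℂ F 0 = fderiv ℂ ψ 0 := by
  have hGnhds : G ∈ nhds (0 : ℂ × ℂ × ℂ) := hG.mem_nhds h0
  have hFd : DifferentiableAt ℂ F 0 := (hF.differentiableAt hGnhds)
  have hψd : DifferentiableAt ℂ ψ 0 := (hψ.differentiableAt hGnhds)
  -- directional derivatives agree along cone directions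
  have hdir : ∀ v : ℂ × ℂ × ℂ, v.2.2 ^ 2 = v.1 * v.2.1 →
      fderiv ℂ F 0 v = fderiv ℂ ψ 0 v := by
    intro v hv
    set h : ℂ → ℂ × ℂ × ℂ := fun t => t • v with hh
    have hh0 : h 0 = 0 := by simp [hh]
    have hhder : HasDerivAt h v 0 := by
      simpa using (hasDerivAt_id (0 : ℂ)).smul_const v
    have hFc : HasDerivAt (F ∘ h) (fderiv ℂ F 0 v) 0 := by
      have hF' : HasFDerivAt F (fderiv ℂ F 0) (h 0) := hh0 ▸ hFd.hasFDerivAt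
      exact hF'.comp_hasDerivAt 0 hhder
    have hψc : HasDerivAt (ψ ∘ h) (fderiv ℂ ψ 0 v) 0 := by
      have hψ' : HasFDerivAt ψ (fderiv ℂ ψ 0) (h 0) := hh0 ▸ hψd.hasFDerivAt
      exact hψ'.comp_hasDerivAt 0 hhder
    have hpre : h ⁻¹' G ∈ nhds (0 : ℂ) := by
      have hc : Continuous h := by
        rw [hh]
        exact continuous_id.smul continuous_const
      exact hc.continuousAt.preimage_mem_nhds (by rwa [hh0])
    have heqv : (F ∘ h) =ᶠ[nhds (0 : ℂ)] (ψ ∘ h) := by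
      filter_upwards [hpre] with t ht
      have hcone : (h t).2.2 ^ 2 = (h t).1 * (h t).2.1 := by
        simp only [hh, Prod.smul_fst, Prod.smul_snd, smul_eq_mul]
        ring_nf
        rw [hv]
        ring
      exact heq (h t) ht hcone
    exact (hFc.congr_of_eventuallyEq heqv.symm).unique hψc
  have h1 : fderiv ℂ F 0 (1, 0, 0) = fderiv ℂ ψ 0 (1, 0, 0) := hdir _ (by norm_num)
  have h2 : fderiv ℂ F 0 (0, 1, 0) = fderiv ℂ ψ 0 (0, 1, 0) := hdir _ (by norm_num)
  have h3 : fderiv ℂ F 0 (1, 1, 1) = fderiv ℂ ψ 0 (1, 1, 1) := hdir _ (by norm_num)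
  have he3 : fderiv ℂ F 0 (0, 0, 1) = fderiv ℂ ψ 0 (0, 0, 1) := by
    have hsum : ((1:ℂ), (1:ℂ), (1:ℂ)) = ((1:ℂ),(0:ℂ),(0:ℂ)) + ((0:ℂ),(1:ℂ),(0:ℂ)) + ((0:ℂ),(0:ℂ),(1:ℂ)) := by
      simp [Prod.ext_iff]
    rw [hsum] at h3
    simp only [map_add] at h3
    rw [h1, h2] at h3
    exact add_left_cancel h3
  apply ContinuousLinearMap.ext
  intro v
  have hv : v = v.1 • ((1:ℂ),(0:ℂ),(0:ℂ)) + v.2.1 • ((0:ℂ),(1:ℂ),(0:ℂ)) + v.2.2 • ((0:ℂ),(0:ℂ),(1:ℂ)) := by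
    simp [Prod.ext_iff]
  rw [hv]
  simp only [map_add, map_smul, h1, h2, he3]
end
end

section
/- Let G ⊆ ℂ³ be a balanced open set with 𝒱 ⊆ G, where 𝒱 = {z ∈ 𝔻³ : z₃² = z₁z₂}. If (G,𝒱) is a norm preserving pair, then G ⊆ 𝒢 = {z ∈ 𝔻³ : |z₁z₂ − z₃²| < (1 − |z₃|²) + √(1 − |z₁|²)·√(1 − |z₂|²)}. -/
open Metric

noncomputable section

/-- The variety `𝒱 = {z ∈ 𝔻³ : z₃² = z₁z₂}`. -/
def calV : Set (ℂ × ℂ × ℂ) := {z | z ∈ triD ∧ z.2.2 ^ 2 = z.1 * z.2.1}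

/-- A function is holomorphic on `𝒱` if near every point of `𝒱` it extends to a
holomorphic function on an open neighbourhood. -/
def HoloOnV (f : ℂ × ℂ × ℂ → ℂ) : Prop :=
  ∀ p ∈ calV, ∃ U : Set (ℂ × ℂ × ℂ), IsOpen U ∧ p ∈ U ∧
    ∃ F : ℂ × ℂ × ℂ → ℂ, DifferentiableOn ℂ F U ∧ ∀ q ∈ U ∩ calV, F q = f q

open Finset

def Wset : Set (ℂ × ℂ × ℂ) :=
  {z | ‖z.1‖ ≤ 1 ∧ ‖z.2.1‖ ≤ 1 ∧ ‖z.2.2‖ ≤ 1 ∧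
    ‖z.1 * z.2.1 - z.2.2 ^ 2‖ ≤
      (1 - ‖z.2.2‖ ^ 2) + Real.sqrt (1 - ‖z.1‖ ^ 2) * Real.sqrt (1 - ‖z.2.1‖ ^ 2)}

lemma normsq_eq_norm_sq (z : ℂ) : z.re^2 + z.im^2 = ‖z‖^2 := by
  rw [Complex.sq_norm, Complex.normSq_apply]; ring

lemma normsq_le_one {z : ℂ} (h : ‖z‖ ≤ 1) : z.re^2 + z.im^2 ≤ 1 := by
  rw [normsq_eq_norm_sq]; nlinarith [norm_nonneg z]

lemma pair_ineq (u₁ v₁ u₂ v₂ : ℂ) (hu₁ : ‖u₁‖ ≤ 1) (hv₁ : ‖v₁‖ ≤ 1)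
    (hu₂ : ‖u₂‖ ≤ 1) (hv₂ : ‖v₂‖ ≤ 1) :
    (1/2 : ℝ) * ‖u₁*v₂ - u₂*v₁‖^2 ≤
      (1 - ((u₁*v₁) * (starRingEnd ℂ) (u₂*v₂)).re)
      + Real.sqrt (1 - ((u₁^2) * (starRingEnd ℂ) (u₂^2)).re)
        * Real.sqrt (1 - ((v₁^2) * (starRingEnd ℂ) (v₂^2)).re) := by
  set a : ℂ := u₁ * (starRingEnd ℂ) u₂ with ha
  set b : ℂ := v₁ * (starRingEnd ℂ) v₂ with hb
  have hA : a.re^2 + a.im^2 ≤ 1 := by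
    refine normsq_le_one ?_
    rw [ha, norm_mul, RCLike.norm_conj]
    exact mul_le_one₀ hu₁ (norm_nonneg _) hu₂
  have hB : b.re^2 + b.im^2 ≤ 1 := by
    refine normsq_le_one ?_
    rw [hb, norm_mul, RCLike.norm_conj]
    exact mul_le_one₀ hv₁ (norm_nonneg _) hv₂
  have e1 : (u₁*v₁) * (starRingEnd ℂ) (u₂*v₂) = a * b := by
    rw [ha, hb, map_mul]; ring
  have e2 : (u₁^2) * (starRingEnd ℂ) (u₂^2) = a^2 := by
    rw [ha, map_pow]; ring
  have e3 : (v₁^2) * (starRingEnd ℂ) (v₂^2) = b^2 := by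
    rw [hb, map_pow]; ring
  rw [e1, e2, e3]
  have key1 : ‖u₁*v₂ - u₂*v₁‖^2 =
      ‖u₁‖^2*‖v₂‖^2 + ‖u₂‖^2*‖v₁‖^2 - 2*(a * (starRingEnd ℂ) b).re := by
    have h1 : ‖u₁*v₂ - u₂*v₁‖^2 = Complex.normSq (u₁*v₂) + Complex.normSq (u₂*v₁)
        - 2*((u₁*v₂) * (starRingEnd ℂ) (u₂*v₁)).re := by
      rw [Complex.sq_norm, Complex.normSq_sub]
    rw [h1]
    have h2 : (u₁*v₂) * (starRingEnd ℂ) (u₂*v₁) = a * (starRingEnd ℂ) b := by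
      rw [ha, hb, map_mul, map_mul, Complex.conj_conj]; ring
    rw [h2, Complex.normSq_mul, Complex.normSq_mul, Complex.normSq_eq_norm_sq,
      Complex.normSq_eq_norm_sq, Complex.normSq_eq_norm_sq, Complex.normSq_eq_norm_sq]
  have hx : ‖u₁‖^2*‖v₂‖^2 + ‖u₂‖^2*‖v₁‖^2 ≤
      1 + (a.re^2 + a.im^2) * (b.re^2 + b.im^2) := by
    have hab : (a.re^2 + a.im^2) * (b.re^2 + b.im^2)
        = (‖u₁‖^2*‖v₂‖^2) * (‖u₂‖^2*‖v₁‖^2) := by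
      have na : a.re^2 + a.im^2 = ‖u₁‖^2 * ‖u₂‖^2 := by
        rw [normsq_eq_norm_sq, ha, norm_mul, RCLike.norm_conj]; ring
      have nb : b.re^2 + b.im^2 = ‖v₁‖^2 * ‖v₂‖^2 := by
        rw [normsq_eq_norm_sq, hb, norm_mul, RCLike.norm_conj]; ring
      rw [na, nb]; ring
    have g1 : ‖u₁‖*‖v₂‖ ≤ 1 := mul_le_one₀ hu₁ (norm_nonneg _) hv₂
    have g2 : ‖u₂‖*‖v₁‖ ≤ 1 := mul_le_one₀ hu₂ (norm_nonneg _) hv₁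
    have h1 : ‖u₁‖^2*‖v₂‖^2 ≤ 1 := by
      nlinarith [mul_nonneg (norm_nonneg u₁) (norm_nonneg v₂), g1]
    have h2 : ‖u₂‖^2*‖v₁‖^2 ≤ 1 := by
      nlinarith [mul_nonneg (norm_nonneg u₂) (norm_nonneg v₁), g2]
    nlinarith [mul_nonneg (mul_nonneg (sq_nonneg ‖u₁‖) (sq_nonneg ‖v₂‖))
      (mul_nonneg (sq_nonneg ‖u₂‖) (sq_nonneg ‖v₁‖))]
  have hre2 : (a^2).re = a.re^2 - a.im^2 := by
    rw [pow_two, Complex.mul_re]; ring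
  have hre3 : (b^2).re = b.re^2 - b.im^2 := by
    rw [pow_two, Complex.mul_re]; ring
  have hsa : 2*a.im^2 ≤ 1 - (a^2).re := by rw [hre2]; nlinarith
  have hsb : 2*b.im^2 ≤ 1 - (b^2).re := by rw [hre3]; nlinarith
  have hsqrt : 2 * |a.im| * |b.im| ≤
      Real.sqrt (1 - (a^2).re) * Real.sqrt (1 - (b^2).re) := by
    have l1 : Real.sqrt (2*a.im^2) ≤ Real.sqrt (1 - (a^2).re) := Real.sqrt_le_sqrt hsa
    have l2 : Real.sqrt (2*b.im^2) ≤ Real.sqrt (1 - (b^2).re) := Real.sqrt_le_sqrt hsb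
    have e : Real.sqrt (2*a.im^2) * Real.sqrt (2*b.im^2) = 2 * |a.im| * |b.im| := by
      rw [Real.sqrt_mul (by norm_num : (0:ℝ) ≤ 2), Real.sqrt_mul (by norm_num : (0:ℝ) ≤ 2),
        Real.sqrt_sq_eq_abs, Real.sqrt_sq_eq_abs]
      have h22 : Real.sqrt 2 * Real.sqrt 2 = 2 := Real.mul_self_sqrt (by norm_num)
      rw [show Real.sqrt 2 * |a.im| * (Real.sqrt 2 * |b.im|)
        = (Real.sqrt 2 * Real.sqrt 2) * (|a.im| * |b.im|) from by ring, h22]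
      ring
    calc 2 * |a.im| * |b.im| = Real.sqrt (2*a.im^2) * Real.sqrt (2*b.im^2) := e.symm
      _ ≤ _ := mul_le_mul l1 l2 (Real.sqrt_nonneg _) (Real.sqrt_nonneg _)
  have hre1 : (a * (starRingEnd ℂ) b).re = a.re*b.re + a.im*b.im := by
    rw [Complex.mul_re, Complex.conj_re, Complex.conj_im]; ring
  have hre4 : (a*b).re = a.re*b.re - a.im*b.im := by rw [Complex.mul_re]
  have habs : -(2*(a.im*b.im)) ≤ 2 * |a.im| * |b.im| := by
    have h1 := neg_abs_le (a.im*b.im)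
    have h2 := abs_mul a.im b.im
    nlinarith
  have hP : (a.re^2 + a.im^2) * (b.re^2 + b.im^2) ≤ 1 :=
    mul_le_one₀ hA (by positivity) hB
  rw [key1, hre4, hre1]
  linarith [hx, hP, habs, hsqrt]

variable {ι : Type}

lemma one_sub_normsq (s : Finset ι) (w : ι → ℝ) (f : ι → ℂ)
    (hsum : ∑ i ∈ s, w i = 1) :
    1 - ‖∑ i ∈ s, (w i : ℂ) * f i‖^2
      = ∑ i ∈ s, ∑ j ∈ s, w i * w j * (1 - (f i * (starRingEnd ℂ) (f j)).re) := by
  have hconj : (starRingEnd ℂ) (∑ i ∈ s, (w i : ℂ) * f i)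
      = ∑ j ∈ s, (w j : ℂ) * (starRingEnd ℂ) (f j) := by
    rw [map_sum]
    exact Finset.sum_congr rfl fun j _ => by rw [map_mul, Complex.conj_ofReal]
  have hprod : (∑ i ∈ s, (w i : ℂ) * f i) * (starRingEnd ℂ) (∑ i ∈ s, (w i : ℂ) * f i)
      = ∑ i ∈ s, ∑ j ∈ s, ((w i * w j : ℝ) : ℂ) * (f i * (starRingEnd ℂ) (f j)) := by
    rw [hconj, Finset.sum_mul_sum]
    exact Finset.sum_congr rfl fun i _ => Finset.sum_congr rfl fun j _ => by
      push_cast; ring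
  have hnormsq : ‖∑ i ∈ s, (w i : ℂ) * f i‖^2
      = ∑ i ∈ s, ∑ j ∈ s, w i * w j * (f i * (starRingEnd ℂ) (f j)).re := by
    have h0 : ‖∑ i ∈ s, (w i : ℂ) * f i‖^2
        = ((∑ i ∈ s, (w i : ℂ) * f i) * (starRingEnd ℂ) (∑ i ∈ s, (w i : ℂ) * f i)).re := by
      rw [Complex.mul_conj, Complex.ofReal_re, Complex.sq_norm]
    rw [h0, hprod, Complex.re_sum]
    refine Finset.sum_congr rfl fun i _ => ?_
    rw [Complex.re_sum]
    exact Finset.sum_congr rfl fun j _ => by rw [Complex.re_ofReal_mul]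
  have hone : (1:ℝ) = ∑ i ∈ s, ∑ j ∈ s, w i * w j := by
    rw [← Finset.sum_mul_sum, hsum]; norm_num
  rw [hnormsq]
  nth_rewrite 1 [hone]
  rw [← Finset.sum_sub_distrib]
  refine Finset.sum_congr rfl fun i _ => ?_
  rw [← Finset.sum_sub_distrib]
  exact Finset.sum_congr rfl fun j _ => by ring

lemma sum_norm_le_one (s : Finset ι) (w : ι → ℝ) (f : ι → ℂ)
    (hw : ∀ i ∈ s, 0 ≤ w i) (hsum : ∑ i ∈ s, w i = 1)
    (hf : ∀ i ∈ s, ‖f i‖ ≤ 1) :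
    ‖∑ i ∈ s, (w i : ℂ) * f i‖ ≤ 1 := by
  calc ‖∑ i ∈ s, (w i : ℂ) * f i‖ ≤ ∑ i ∈ s, ‖(w i : ℂ) * f i‖ := norm_sum_le _ _
    _ ≤ ∑ i ∈ s, w i := by
        refine Finset.sum_le_sum fun i hi => ?_
        rw [norm_mul, Complex.norm_real, Real.norm_eq_abs, abs_of_nonneg (hw i hi)]
        calc w i * ‖f i‖ ≤ w i * 1 := by
              exact mul_le_mul_of_nonneg_left (hf i hi) (hw i hi)
          _ = w i := mul_one _
    _ = 1 := hsum

lemma core_sum (s : Finset ι) (w : ι → ℝ) (u v : ι → ℂ)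
    (hw : ∀ i ∈ s, 0 ≤ w i) (hsum : ∑ i ∈ s, w i = 1)
    (hu : ∀ i ∈ s, ‖u i‖ ≤ 1) (hv : ∀ i ∈ s, ‖v i‖ ≤ 1) :
    ‖(∑ i ∈ s, (w i : ℂ) * (u i)^2) * (∑ i ∈ s, (w i : ℂ) * (v i)^2)
      - (∑ i ∈ s, (w i : ℂ) * (u i * v i))^2‖ ≤
    (1 - ‖∑ i ∈ s, (w i : ℂ) * (u i * v i)‖^2)
    + Real.sqrt (1 - ‖∑ i ∈ s, (w i : ℂ) * (u i)^2‖^2)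
      * Real.sqrt (1 - ‖∑ i ∈ s, (w i : ℂ) * (v i)^2‖^2) := by
  -- the algebraic identity
  have hXYZ : (∑ i ∈ s, (w i : ℂ) * (u i)^2) * (∑ i ∈ s, (w i : ℂ) * (v i)^2)
      - (∑ i ∈ s, (w i : ℂ) * (u i * v i))^2
      = (2⁻¹ : ℂ) * ∑ i ∈ s, ∑ j ∈ s,
          ((w i * w j : ℝ) : ℂ) * (u i * v j - u j * v i)^2 := by
    have e1 : (∑ i ∈ s, (w i : ℂ) * (u i)^2) * (∑ i ∈ s, (w i : ℂ) * (v i)^2)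
        = ∑ i ∈ s, ∑ j ∈ s, ((w i * w j : ℝ) : ℂ) * ((u i)^2 * (v j)^2) := by
      rw [Finset.sum_mul_sum]
      exact Finset.sum_congr rfl fun i _ => Finset.sum_congr rfl fun j _ => by
        push_cast; ring
    have e1' : (∑ i ∈ s, (w i : ℂ) * (u i)^2) * (∑ i ∈ s, (w i : ℂ) * (v i)^2)
        = ∑ i ∈ s, ∑ j ∈ s, ((w i * w j : ℝ) : ℂ) * ((u j)^2 * (v i)^2) := by
      rw [e1, Finset.sum_comm]
      refine Finset.sum_congr rfl fun i _ => Finset.sum_congr rfl fun j _ => by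
        rw [mul_comm (w j) (w i)]
    have e2 : (∑ i ∈ s, (w i : ℂ) * (u i * v i))^2
        = ∑ i ∈ s, ∑ j ∈ s, ((w i * w j : ℝ) : ℂ) * (u i * v i * (u j * v j)) := by
      rw [pow_two, Finset.sum_mul_sum]
      exact Finset.sum_congr rfl fun i _ => Finset.sum_congr rfl fun j _ => by
        push_cast; ring
    have e3 : ∑ i ∈ s, ∑ j ∈ s, ((w i * w j : ℝ) : ℂ) * (u i * v j - u j * v i)^2
        = (∑ i ∈ s, ∑ j ∈ s, ((w i * w j : ℝ) : ℂ) * ((u i)^2 * (v j)^2))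
          + (∑ i ∈ s, ∑ j ∈ s, ((w i * w j : ℝ) : ℂ) * ((u j)^2 * (v i)^2))
          - 2 * ∑ i ∈ s, ∑ j ∈ s, ((w i * w j : ℝ) : ℂ) * (u i * v i * (u j * v j)) := by
      rw [Finset.mul_sum, ← Finset.sum_add_distrib, ← Finset.sum_sub_distrib]
      refine Finset.sum_congr rfl fun i _ => ?_
      rw [Finset.mul_sum, ← Finset.sum_add_distrib, ← Finset.sum_sub_distrib]
      exact Finset.sum_congr rfl fun j _ => by ring
    rw [e2, e3, ← e1, ← e1']
    ring
  -- bound the norm by the double sum of norms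
  have step1 : ‖(∑ i ∈ s, (w i : ℂ) * (u i)^2) * (∑ i ∈ s, (w i : ℂ) * (v i)^2)
      - (∑ i ∈ s, (w i : ℂ) * (u i * v i))^2‖
      ≤ ∑ i ∈ s, ∑ j ∈ s, w i * w j * ((1/2) * ‖u i * v j - u j * v i‖^2) := by
    rw [hXYZ, norm_mul]
    have hn2 : ‖(2⁻¹ : ℂ)‖ = 1/2 := by
      rw [norm_inv]; norm_num
    rw [hn2]
    calc (1/2) * ‖∑ i ∈ s, ∑ j ∈ s, ((w i * w j : ℝ) : ℂ) * (u i * v j - u j * v i)^2‖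
        ≤ (1/2) * ∑ i ∈ s, ∑ j ∈ s, w i * w j * ‖u i * v j - u j * v i‖^2 := by
          refine mul_le_mul_of_nonneg_left ?_ (by norm_num)
          calc ‖∑ i ∈ s, ∑ j ∈ s, ((w i * w j : ℝ) : ℂ) * (u i * v j - u j * v i)^2‖
              ≤ ∑ i ∈ s, ‖∑ j ∈ s, ((w i * w j : ℝ) : ℂ) * (u i * v j - u j * v i)^2‖ :=
                norm_sum_le _ _
            _ ≤ ∑ i ∈ s, ∑ j ∈ s, w i * w j * ‖u i * v j - u j * v i‖^2 := by
                refine Finset.sum_le_sum fun i hi => ?_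
                calc ‖∑ j ∈ s, ((w i * w j : ℝ) : ℂ) * (u i * v j - u j * v i)^2‖
                    ≤ ∑ j ∈ s, ‖((w i * w j : ℝ) : ℂ) * (u i * v j - u j * v i)^2‖ :=
                      norm_sum_le _ _
                  _ ≤ ∑ j ∈ s, w i * w j * ‖u i * v j - u j * v i‖^2 := by
                      refine Finset.sum_le_sum fun j hj => ?_
                      rw [norm_mul, norm_pow, Complex.norm_real, Real.norm_eq_abs,
                        abs_of_nonneg (mul_nonneg (hw i hi) (hw j hj))]
      _ = ∑ i ∈ s, ∑ j ∈ s, w i * w j * ((1/2) * ‖u i * v j - u j * v i‖^2) := by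
          rw [Finset.mul_sum]
          refine Finset.sum_congr rfl fun i _ => ?_
          rw [Finset.mul_sum]
          exact Finset.sum_congr rfl fun j _ => by ring
  -- apply pairwise inequality
  have step2 : ∑ i ∈ s, ∑ j ∈ s, w i * w j * ((1/2) * ‖u i * v j - u j * v i‖^2)
      ≤ ∑ i ∈ s, ∑ j ∈ s, w i * w j *
          ((1 - ((u i * v i) * (starRingEnd ℂ) (u j * v j)).re)
            + Real.sqrt (1 - ((u i)^2 * (starRingEnd ℂ) ((u j)^2)).re)
              * Real.sqrt (1 - ((v i)^2 * (starRingEnd ℂ) ((v j)^2)).re)) := by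
    refine Finset.sum_le_sum fun i hi => Finset.sum_le_sum fun j hj => ?_
    refine mul_le_mul_of_nonneg_left ?_ (mul_nonneg (hw i hi) (hw j hj))
    exact pair_ineq (u i) (v i) (u j) (v j) (hu i hi) (hv i hi) (hu j hj) (hv j hj)
  -- split the sum
  have step3 : ∑ i ∈ s, ∑ j ∈ s, w i * w j *
          ((1 - ((u i * v i) * (starRingEnd ℂ) (u j * v j)).re)
            + Real.sqrt (1 - ((u i)^2 * (starRingEnd ℂ) ((u j)^2)).re)
              * Real.sqrt (1 - ((v i)^2 * (starRingEnd ℂ) ((v j)^2)).re))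
      = (1 - ‖∑ i ∈ s, (w i : ℂ) * (u i * v i)‖^2)
        + ∑ i ∈ s, ∑ j ∈ s, w i * w j *
            (Real.sqrt (1 - ((u i)^2 * (starRingEnd ℂ) ((u j)^2)).re)
              * Real.sqrt (1 - ((v i)^2 * (starRingEnd ℂ) ((v j)^2)).re)) := by
    rw [one_sub_normsq s w (fun i => u i * v i) hsum, ← Finset.sum_add_distrib]
    refine Finset.sum_congr rfl fun i _ => ?_
    rw [← Finset.sum_add_distrib]
    exact Finset.sum_congr rfl fun j _ => by ring
  -- Cauchy-Schwarz on the sqrt part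
  have step4 : ∑ i ∈ s, ∑ j ∈ s, w i * w j *
          (Real.sqrt (1 - ((u i)^2 * (starRingEnd ℂ) ((u j)^2)).re)
            * Real.sqrt (1 - ((v i)^2 * (starRingEnd ℂ) ((v j)^2)).re))
      ≤ Real.sqrt (1 - ‖∑ i ∈ s, (w i : ℂ) * (u i)^2‖^2)
        * Real.sqrt (1 - ‖∑ i ∈ s, (w i : ℂ) * (v i)^2‖^2) := by
    set F : ι × ι → ℝ := fun p => max (w p.1 * w p.2 *
      (1 - ((u p.1)^2 * (starRingEnd ℂ) ((u p.2)^2)).re)) 0 with hF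
    set Gg : ι × ι → ℝ := fun p => max (w p.1 * w p.2 *
      (1 - ((v p.1)^2 * (starRingEnd ℂ) ((v p.2)^2)).re)) 0 with hG
    have hFnn : ∀ p, 0 ≤ F p := fun p => le_max_right _ _
    have hGnn : ∀ p, 0 ≤ Gg p := fun p => le_max_right _ _
    have hremem : ∀ (g : ι → ℂ), (∀ i ∈ s, ‖g i‖ ≤ 1) → ∀ i ∈ s, ∀ j ∈ s,
        0 ≤ 1 - ((g i)^2 * (starRingEnd ℂ) ((g j)^2)).re := by
      intro g hg i hi j hj
      have h1 : ((g i)^2 * (starRingEnd ℂ) ((g j)^2)).re ≤ ‖(g i)^2 * (starRingEnd ℂ) ((g j)^2)‖ :=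
        Complex.re_le_norm _
      have h2 : ‖(g i)^2 * (starRingEnd ℂ) ((g j)^2)‖ ≤ 1 := by
        rw [norm_mul, RCLike.norm_conj, norm_pow, norm_pow]
        have a1 : ‖g i‖^2 ≤ 1 := by nlinarith [norm_nonneg (g i), hg i hi]
        have a2 : ‖g j‖^2 ≤ 1 := by nlinarith [norm_nonneg (g j), hg j hj]
        exact mul_le_one₀ a1 (by positivity) a2
      linarith
    have hFeq : ∀ i ∈ s, ∀ j ∈ s, F (i,j) = w i * w j *
        (1 - ((u i)^2 * (starRingEnd ℂ) ((u j)^2)).re) := by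
      intro i hi j hj
      exact max_eq_left (mul_nonneg (mul_nonneg (hw i hi) (hw j hj)) (hremem u hu i hi j hj))
    have hGeq : ∀ i ∈ s, ∀ j ∈ s, Gg (i,j) = w i * w j *
        (1 - ((v i)^2 * (starRingEnd ℂ) ((v j)^2)).re) := by
      intro i hi j hj
      exact max_eq_left (mul_nonneg (mul_nonneg (hw i hi) (hw j hj)) (hremem v hv i hi j hj))
    have cs := Real.sum_sqrt_mul_sqrt_le (s ×ˢ s) hFnn hGnn
    have lhs_eq : ∑ p ∈ s ×ˢ s, Real.sqrt (F p) * Real.sqrt (Gg p)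
        = ∑ i ∈ s, ∑ j ∈ s, w i * w j *
          (Real.sqrt (1 - ((u i)^2 * (starRingEnd ℂ) ((u j)^2)).re)
            * Real.sqrt (1 - ((v i)^2 * (starRingEnd ℂ) ((v j)^2)).re)) := by
      rw [Finset.sum_product]
      refine Finset.sum_congr rfl fun i hi => Finset.sum_congr rfl fun j hj => ?_
      rw [hFeq i hi j hj, hGeq i hi j hj,
        Real.sqrt_mul (mul_nonneg (hw i hi) (hw j hj)),
        Real.sqrt_mul (mul_nonneg (hw i hi) (hw j hj)),
        show √(w i * w j) * √(1 - ((u i)^2 * (starRingEnd ℂ) ((u j)^2)).re) *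
          (√(w i * w j) * √(1 - ((v i)^2 * (starRingEnd ℂ) ((v j)^2)).re))
          = (√(w i * w j) * √(w i * w j)) * (√(1 - ((u i)^2 * (starRingEnd ℂ) ((u j)^2)).re)
              * √(1 - ((v i)^2 * (starRingEnd ℂ) ((v j)^2)).re)) from by ring,
        Real.mul_self_sqrt (mul_nonneg (hw i hi) (hw j hj))]
    have rhsF : ∑ p ∈ s ×ˢ s, F p = 1 - ‖∑ i ∈ s, (w i : ℂ) * (u i)^2‖^2 := by
      rw [Finset.sum_product, one_sub_normsq s w (fun i => (u i)^2) hsum]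
      exact Finset.sum_congr rfl fun i hi => Finset.sum_congr rfl fun j hj => hFeq i hi j hj
    have rhsG : ∑ p ∈ s ×ˢ s, Gg p = 1 - ‖∑ i ∈ s, (w i : ℂ) * (v i)^2‖^2 := by
      rw [Finset.sum_product, one_sub_normsq s w (fun i => (v i)^2) hsum]
      exact Finset.sum_congr rfl fun i hi => Finset.sum_congr rfl fun j hj => hGeq i hi j hj
    rw [← lhs_eq, ← rhsF, ← rhsG]
    exact cs
  calc _ ≤ _ := step1
    _ ≤ _ := step2
    _ = _ := step3
    _ ≤ _ := by exact add_le_add_right step4 _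

lemma exp_half_sq (z : ℂ) (hz : z ≠ 0) : (Complex.exp (Complex.log z / 2))^2 = z := by
  rw [pow_two, ← Complex.exp_add]
  rw [show Complex.log z / 2 + Complex.log z / 2 = Complex.log z from by ring]
  exact Complex.exp_log hz

lemma exp_half_norm (z : ℂ) (h1 : ‖z‖ ≤ 1) : ‖Complex.exp (Complex.log z / 2)‖ ≤ 1 := by
  rw [Complex.norm_exp]
  rw [Real.exp_le_one_iff]
  have : (Complex.log z / 2).re = (Complex.log z).re / 2 := by
    rw [Complex.div_re]; simp; ring
  rw [this, Complex.log_re]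
  rcases eq_or_ne z 0 with h | h
  · simp [h]
  · have := Real.log_nonpos (norm_nonneg z) h1
    linarith

lemma calV_param {z : ℂ × ℂ × ℂ} (hz : z ∈ calV) :
    ∃ u v : ℂ, ‖u‖ ≤ 1 ∧ ‖v‖ ≤ 1 ∧ z = (u^2, v^2, u*v) := by
  obtain ⟨⟨h1, h2, h3⟩, heq⟩ := hz
  rw [uD, mem_ball_zero_iff] at h1 h2 h3
  rcases eq_or_ne z.1 0 with hz1 | hz1
  · have hz3 : z.2.2 = 0 := by
      have : z.2.2^2 = 0 := by rw [heq, hz1, zero_mul]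
      exact pow_eq_zero_iff (by norm_num) |>.mp this
    rcases eq_or_ne z.2.1 0 with hz2 | hz2
    · exact ⟨0, 0, by norm_num, by norm_num, by
        rw [Prod.ext_iff, Prod.ext_iff]; simp [hz1, hz2, hz3]⟩
    · refine ⟨0, Complex.exp (Complex.log z.2.1 / 2), by norm_num,
        exp_half_norm _ h2.le, ?_⟩
      rw [Prod.ext_iff, Prod.ext_iff]
      simp [hz1, hz3, exp_half_sq _ hz2]
  · set u := Complex.exp (Complex.log z.1 / 2) with hu
    have hu0 : u ≠ 0 := Complex.exp_ne_zero _
    have hu2 : u^2 = z.1 := exp_half_sq _ hz1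
    refine ⟨u, z.2.2 / u, exp_half_norm _ h1.le, ?_, ?_⟩
    · have hnu : ‖u‖^2 = ‖z.1‖ := by rw [← norm_pow, hu2]
      have hv2 : ‖z.2.2 / u‖^2 = ‖z.2.1‖ := by
        rw [norm_div, div_pow, hnu, ← norm_pow, heq, norm_mul]
        exact mul_div_cancel_left₀ _ (norm_ne_zero_iff.mpr hz1)
      nlinarith [norm_nonneg (z.2.2/u), hv2, h2.le]
    · have hv2 : (z.2.2/u)^2 = z.2.1 := by
        rw [div_pow, hu2, heq]
        field_simp
      have huv : u * (z.2.2/u) = z.2.2 := by field_simp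
      rw [Prod.ext_iff, Prod.ext_iff]
      exact ⟨hu2.symm, hv2.symm, huv.symm⟩

lemma Wset_closed : IsClosed Wset := by
  have k1 : Continuous fun z : ℂ × ℂ × ℂ => z.1 := continuous_fst
  have k2 : Continuous fun z : ℂ × ℂ × ℂ => z.2.1 := continuous_fst.comp continuous_snd
  have k3 : Continuous fun z : ℂ × ℂ × ℂ => z.2.2 := continuous_snd.comp continuous_snd
  have c1 : Continuous fun z : ℂ × ℂ × ℂ => ‖z.1‖ := k1.norm
  have c2 : Continuous fun z : ℂ × ℂ × ℂ => ‖z.2.1‖ := k2.norm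
  have c3 : Continuous fun z : ℂ × ℂ × ℂ => ‖z.2.2‖ := k3.norm
  have c4 : Continuous fun z : ℂ × ℂ × ℂ => ‖z.1 * z.2.1 - z.2.2 ^ 2‖ :=
    ((k1.mul k2).sub (k3.pow 2)).norm
  have c5 : Continuous fun z : ℂ × ℂ × ℂ =>
      (1 - ‖z.2.2‖ ^ 2) + Real.sqrt (1 - ‖z.1‖ ^ 2) * Real.sqrt (1 - ‖z.2.1‖ ^ 2) := by
    refine Continuous.add (continuous_const.sub (c3.pow 2)) (Continuous.mul ?_ ?_)
    · exact Real.continuous_sqrt.comp (continuous_const.sub (c1.pow 2))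
    · exact Real.continuous_sqrt.comp (continuous_const.sub (c2.pow 2))
  exact (isClosed_le c1 continuous_const).inter ((isClosed_le c2 continuous_const).inter
    ((isClosed_le c3 continuous_const).inter (isClosed_le c4 c5)))

lemma mem_calV_iff {z : ℂ × ℂ × ℂ} :
    z ∈ calV ↔ (‖z.1‖ < 1 ∧ ‖z.2.1‖ < 1 ∧ ‖z.2.2‖ < 1) ∧ z.2.2 ^ 2 = z.1 * z.2.1 := by
  unfold calV triD uD
  simp [mem_ball_zero_iff]

lemma V0 : ((0,0,0) : ℂ × ℂ × ℂ) ∈ calV := by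
  rw [mem_calV_iff]; norm_num

lemma calV_bal {ζ : ℂ} (hζ : ‖ζ‖ ≤ 1) {z : ℂ × ℂ × ℂ} (hz : z ∈ calV) :
    ζ • z ∈ calV := by
  rw [mem_calV_iff] at hz ⊢
  obtain ⟨⟨h1, h2, h3⟩, heq⟩ := hz
  have hs1 : (ζ • z).1 = ζ * z.1 := rfl
  have hs2 : (ζ • z).2.1 = ζ * z.2.1 := rfl
  have hs3 : (ζ • z).2.2 = ζ * z.2.2 := rfl
  refine ⟨⟨?_, ?_, ?_⟩, ?_⟩
  · rw [hs1, norm_mul]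
    calc ‖ζ‖ * ‖z.1‖ ≤ 1 * ‖z.1‖ := by
          exact mul_le_mul_of_nonneg_right hζ (norm_nonneg _)
      _ = ‖z.1‖ := one_mul _
      _ < 1 := h1
  · rw [hs2, norm_mul]
    calc ‖ζ‖ * ‖z.2.1‖ ≤ 1 * ‖z.2.1‖ := mul_le_mul_of_nonneg_right hζ (norm_nonneg _)
      _ = ‖z.2.1‖ := one_mul _
      _ < 1 := h2
  · rw [hs3, norm_mul]
    calc ‖ζ‖ * ‖z.2.2‖ ≤ 1 * ‖z.2.2‖ := mul_le_mul_of_nonneg_right hζ (norm_nonneg _)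
      _ = ‖z.2.2‖ := one_mul _
      _ < 1 := h3
  · rw [hs1, hs2, hs3]
    ring_nf
    rw [show ζ ^ 2 * z.2.2 ^ 2 = ζ ^ 2 * (z.1 * z.2.1) from by rw [heq]]
    ring

lemma linear_constraint (G : Set (ℂ × ℂ × ℂ)) (hG : IsOpen G) (hbal : Balanced ℂ G)
    (hVG : calV ⊆ G)
    (hnp : ∀ f : ℂ × ℂ × ℂ → ℂ, HoloOnV f → (∃ C : ℝ, ∀ z ∈ calV, ‖f z‖ ≤ C) →
      ∃ F : ℂ × ℂ × ℂ → ℂ, DifferentiableOn ℂ F G ∧ (∀ z ∈ calV, F z = f z) ∧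
        sSup ((fun z => ‖F z‖) '' G) = sSup ((fun z => ‖f z‖) '' calV))
    {lam : ℂ × ℂ × ℂ} (hlam : lam ∈ G) (A B C : ℂ) :
    ‖A * lam.1 + B * lam.2.1 + C * lam.2.2‖ ≤
      sSup ((fun z => ‖A * z.1 + B * z.2.1 + C * z.2.2‖) '' calV) := by
  set l : ℂ × ℂ × ℂ → ℂ := fun z => A * z.1 + B * z.2.1 + C * z.2.2 with hl
  set Sf : ℝ := sSup ((fun z => ‖l z‖) '' calV) with hSf
  -- bounds on the variety
  have hbound : ∀ z ∈ calV, ‖l z‖ ≤ ‖A‖ + ‖B‖ + ‖C‖ := by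
    intro z hz
    rw [mem_calV_iff] at hz
    obtain ⟨⟨h1, h2, h3⟩, -⟩ := hz
    calc ‖l z‖ ≤ ‖A * z.1 + B * z.2.1‖ + ‖C * z.2.2‖ := norm_add_le _ _
      _ ≤ (‖A * z.1‖ + ‖B * z.2.1‖) + ‖C * z.2.2‖ := by
          exact add_le_add_left (norm_add_le _ _) _
      _ ≤ (‖A‖ * 1 + ‖B‖ * 1) + ‖C‖ * 1 := by
          rw [norm_mul, norm_mul, norm_mul]
          exact add_le_add (add_le_add
            (mul_le_mul_of_nonneg_left h1.le (norm_nonneg _))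
            (mul_le_mul_of_nonneg_left h2.le (norm_nonneg _)))
            (mul_le_mul_of_nonneg_left h3.le (norm_nonneg _))
      _ = ‖A‖ + ‖B‖ + ‖C‖ := by ring
  have hbddV : BddAbove ((fun z => ‖l z‖) '' calV) := by
    refine ⟨‖A‖ + ‖B‖ + ‖C‖, ?_⟩
    rintro x ⟨z, hz, rfl⟩
    exact hbound z hz
  have hSf0 : 0 ≤ Sf := by
    apply Real.sSup_nonneg
    rintro x ⟨z, hz, rfl⟩
    exact norm_nonneg _
  by_cases hABC : A = 0 ∧ B = 0 ∧ C = 0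
  · obtain ⟨hA, hB, hC⟩ := hABC
    have : l lam = 0 := by rw [hl]; simp [hA, hB, hC]
    rw [show A * lam.1 + B * lam.2.1 + C * lam.2.2 = l lam from rfl, this, norm_zero]
    exact hSf0
  -- there is a point where l does not vanish
  have hz₀ : ∃ z₀ ∈ calV, l z₀ ≠ 0 := by
    by_cases hA : A = 0
    · by_cases hB : B = 0
      · have hC : C ≠ 0 := fun hC => hABC ⟨hA, hB, hC⟩
        refine ⟨(1/4, 1/4, 1/4), ?_, ?_⟩
        · rw [mem_calV_iff]; norm_num
        · rw [hl]; simp [hA, hB]; exact hC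
      · refine ⟨(0, 1/2, 0), ?_, ?_⟩
        · rw [mem_calV_iff]; norm_num
        · rw [hl]; simp [hA]; exact hB
    · refine ⟨(1/2, 0, 0), ?_, ?_⟩
      · rw [mem_calV_iff]; norm_num
      · rw [hl]; simp; exact hA
  obtain ⟨z₀, hz₀V, hz₀ne⟩ := hz₀
  have hSpos : 0 < Sf := by
    calc (0:ℝ) < ‖l z₀‖ := norm_pos_iff.mpr hz₀ne
      _ ≤ Sf := le_csSup hbddV ⟨z₀, hz₀V, rfl⟩
  -- l is differentiable
  have hldiff : Differentiable ℂ l := by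
    rw [hl]
    exact (((differentiable_const A).mul differentiable_fst).add
      ((differentiable_const B).mul (differentiable_fst.comp differentiable_snd))).add
      ((differentiable_const C).mul (differentiable_snd.comp differentiable_snd))
  -- apply the np hypothesis
  obtain ⟨F, hFd, hFV, hFs⟩ := hnp l
    (fun p _ => ⟨Set.univ, isOpen_univ, Set.mem_univ p, l,
      hldiff.differentiableOn, fun q _ => rfl⟩)
    ⟨‖A‖ + ‖B‖ + ‖C‖, hbound⟩
  have himg_bdd : BddAbove ((fun z => ‖F z‖) '' G) := by
    by_contra h
    rw [Real.sSup_of_not_bddAbove h] at hFs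
    rw [hSf] at hSpos
    linarith [hFs.symm]
  have hFle : ∀ z ∈ G, ‖F z‖ ≤ Sf := by
    intro z hz
    rw [hSf, ← hFs]
    exact le_csSup himg_bdd ⟨z, hz, rfl⟩
  -- derivative setup
  have hF0diff : DifferentiableAt ℂ F 0 := by
    have h0G : (0 : ℂ × ℂ × ℂ) ∈ G := hVG V0
    exact hFd.differentiableAt (hG.mem_nhds h0G)
  set T := fderiv ℂ F 0 with hT
  have hcomp : ∀ x : ℂ × ℂ × ℂ, HasDerivAt (fun ζ : ℂ => F (ζ • x)) (T x) 0 := by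
    intro x
    have hF0 : HasFDerivAt F T ((fun ζ : ℂ => ζ • x) 0) := by
      rw [show (fun ζ : ℂ => ζ • x) 0 = 0 from by simp]
      exact hF0diff.hasFDerivAt
    have hsm : HasDerivAt (fun ζ : ℂ => ζ • x) x 0 := by
      simpa using (hasDerivAt_id (0:ℂ)).smul_const x
    exact hF0.comp_hasDerivAt 0 hsm
  -- T agrees with l on calV
  have hTV : ∀ z ∈ calV, T z = l z := by
    intro z hz
    have heq : (fun ζ : ℂ => F (ζ • z)) =ᶠ[nhds (0:ℂ)] fun ζ => ζ * l z := by
      refine Filter.eventuallyEq_of_mem (Metric.ball_mem_nhds (0:ℂ) one_pos) ?_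
      intro ζ hζ
      have hmem : ζ • z ∈ calV := calV_bal (mem_ball_zero_iff.mp hζ).le hz
      have heval : F (ζ • z) = l (ζ • z) := hFV _ hmem
      show F (ζ • z) = ζ * l z
      rw [heval, hl]
      show A * (ζ • z).1 + B * (ζ • z).2.1 + C * (ζ • z).2.2 = ζ * (A * z.1 + B * z.2.1 + C * z.2.2)
      rw [show (ζ • z).1 = ζ * z.1 from rfl, show (ζ • z).2.1 = ζ * z.2.1 from rfl,
        show (ζ • z).2.2 = ζ * z.2.2 from rfl]
      ring
    have hline : HasDerivAt (fun ζ : ℂ => ζ * l z) (l z) 0 := by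
      simpa using (hasDerivAt_id (0:ℂ)).mul_const (l z)
    have hg2 : HasDerivAt (fun ζ : ℂ => F (ζ • z)) (l z) 0 :=
      hline.congr_of_eventuallyEq heq
    exact (hcomp z).unique hg2
  -- T lam = l lam by linearity
  have hTlam : T lam = l lam := by
    have hp1 : ((1/2, 0, 0) : ℂ × ℂ × ℂ) ∈ calV := by rw [mem_calV_iff]; norm_num
    have hp2 : ((0, 1/2, 0) : ℂ × ℂ × ℂ) ∈ calV := by rw [mem_calV_iff]; norm_num
    have hp3 : ((1/4, 1/4, 1/4) : ℂ × ℂ × ℂ) ∈ calV := by rw [mem_calV_iff]; norm_num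
    have hp4 : ((1/4, 1/4, -1/4) : ℂ × ℂ × ℂ) ∈ calV := by rw [mem_calV_iff]; norm_num
    have hdec : lam = (2*lam.1) • ((1/2, 0, 0) : ℂ × ℂ × ℂ)
        + (2*lam.2.1) • ((0, 1/2, 0) : ℂ × ℂ × ℂ)
        + (2*lam.2.2) • ((1/4, 1/4, 1/4) : ℂ × ℂ × ℂ)
        + (-(2*lam.2.2)) • ((1/4, 1/4, -1/4) : ℂ × ℂ × ℂ) := by
      rw [Prod.ext_iff, Prod.ext_iff]
      refine ⟨?_, ?_, ?_⟩ <;>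
        · simp [Prod.smul_def, smul_eq_mul]
          ring
    calc T lam = T ((2*lam.1) • ((1/2, 0, 0) : ℂ × ℂ × ℂ)
        + (2*lam.2.1) • ((0, 1/2, 0) : ℂ × ℂ × ℂ)
        + (2*lam.2.2) • ((1/4, 1/4, 1/4) : ℂ × ℂ × ℂ)
        + (-(2*lam.2.2)) • ((1/4, 1/4, -1/4) : ℂ × ℂ × ℂ)) := by rw [← hdec]
      _ = (2*lam.1) * T (1/2, 0, 0) + (2*lam.2.1) * T (0, 1/2, 0)
          + (2*lam.2.2) * T (1/4, 1/4, 1/4) + (-(2*lam.2.2)) * T (1/4, 1/4, -1/4) := by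
          rw [map_add, map_add, map_add, map_smul, map_smul, map_smul, map_smul]
          simp [smul_eq_mul]
      _ = (2*lam.1) * l (1/2, 0, 0) + (2*lam.2.1) * l (0, 1/2, 0)
          + (2*lam.2.2) * l (1/4, 1/4, 1/4) + (-(2*lam.2.2)) * l (1/4, 1/4, -1/4) := by
          rw [hTV _ hp1, hTV _ hp2, hTV _ hp3, hTV _ hp4]
      _ = l lam := by rw [hl]; simp only; ring
  -- Schwarz lemma
  have key : ∀ ε > (0:ℝ), ‖T lam‖ ≤ Sf + ε := by
    intro ε hε
    set h : ℂ → ℂ := fun ζ => F (ζ • lam) with hh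
    have hd : DifferentiableOn ℂ h (ball (0:ℂ) 1) := by
      intro ζ hζ
      have hmem : ζ • lam ∈ G :=
        hbal.smul_mem (mem_ball_zero_iff.mp hζ).le hlam
      have hFz : DifferentiableAt ℂ F (ζ • lam) := hFd.differentiableAt (hG.mem_nhds hmem)
      have hsm : DifferentiableAt ℂ (fun ζ : ℂ => ζ • lam) ζ := by
        simpa using ((hasDerivAt_id ζ).smul_const lam).differentiableAt
      exact (hFz.comp ζ hsm).differentiableWithinAt
    have h00 : h 0 = 0 := by
      have V0' : (0 : ℂ × ℂ × ℂ) ∈ calV := V0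
      have : h 0 = F 0 := by rw [hh]; simp only [zero_smul]
      rw [this, hFV _ V0', hl]
      show A * (0 : ℂ × ℂ × ℂ).1 + B * (0 : ℂ × ℂ × ℂ).2.1 + C * (0 : ℂ × ℂ × ℂ).2.2 = 0
      simp
    have hmaps : Set.MapsTo h (ball (0:ℂ) 1) (ball (h 0) (Sf + ε)) := by
      intro ζ hζ
      rw [h00, mem_ball_zero_iff]
      have hmem : ζ • lam ∈ G := hbal.smul_mem (mem_ball_zero_iff.mp hζ).le hlam
      calc ‖h ζ‖ ≤ Sf := hFle _ hmem
        _ < Sf + ε := by linarith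
    have := Complex.norm_deriv_le_div_of_mapsTo_ball hd (hmaps.mono_right ball_subset_closedBall) one_pos
    have hder : deriv h 0 = T lam := (hcomp lam).deriv
    rw [hder] at this
    calc ‖T lam‖ ≤ (Sf + ε) / 1 := this
      _ = Sf + ε := by ring
  have : ‖T lam‖ ≤ Sf := le_of_forall_pos_le_add key
  rw [hTlam] at this
  exact this

lemma hull_sub_W : convexHull ℝ calV ⊆ Wset := by
  intro x hx
  rw [_root_.convexHull_eq] at hx
  obtain ⟨κ, t, w, z, hw0, hw1, hzmem, hcm⟩ := hx
  have hex : ∀ i : κ, ∃ uv : ℂ × ℂ, ‖uv.1‖ ≤ 1 ∧ ‖uv.2‖ ≤ 1 ∧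
      (i ∈ t → z i = (uv.1^2, uv.2^2, uv.1*uv.2)) := by
    intro i
    by_cases hi : i ∈ t
    · obtain ⟨u, v, h1, h2, h3⟩ := calV_param (hzmem i hi)
      exact ⟨(u, v), h1, h2, fun _ => h3⟩
    · exact ⟨(0, 0), by norm_num, by norm_num, fun h => absurd h hi⟩
  choose uv h1 h2 h3 using hex
  set u : κ → ℂ := fun i => (uv i).1 with hu
  set v : κ → ℂ := fun i => (uv i).2 with hv
  have hsum : x = ∑ i ∈ t, w i • z i := by
    rw [← hcm, Finset.centerMass_eq_of_sum_1 _ _ hw1]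
  have hx1 : x.1 = ∑ i ∈ t, (w i : ℂ) * (u i)^2 := by
    rw [hsum, Prod.fst_sum]
    refine Finset.sum_congr rfl fun i hi => ?_
    rw [h3 i hi]
    simp [Complex.real_smul]
    exact Or.inl rfl
  have hx2 : x.2.1 = ∑ i ∈ t, (w i : ℂ) * (v i)^2 := by
    rw [hsum, Prod.snd_sum, Prod.fst_sum]
    refine Finset.sum_congr rfl fun i hi => ?_
    rw [h3 i hi]
    simp [Complex.real_smul]
    exact Or.inl rfl
  have hx3 : x.2.2 = ∑ i ∈ t, (w i : ℂ) * (u i * v i) := by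
    rw [hsum, Prod.snd_sum, Prod.snd_sum]
    refine Finset.sum_congr rfl fun i hi => ?_
    rw [h3 i hi]
    simp [Complex.real_smul]
    exact Or.inl rfl
  have hun : ∀ i ∈ t, ‖u i‖ ≤ 1 := fun i _ => h1 i
  have hvn : ∀ i ∈ t, ‖v i‖ ≤ 1 := fun i _ => h2 i
  refine ⟨?_, ?_, ?_, ?_⟩
  · rw [hx1]
    exact sum_norm_le_one t w (fun i => (u i)^2) hw0 hw1 fun i hi => by
      rw [norm_pow]; nlinarith [norm_nonneg (u i), hun i hi]
  · rw [hx2]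
    exact sum_norm_le_one t w (fun i => (v i)^2) hw0 hw1 fun i hi => by
      rw [norm_pow]; nlinarith [norm_nonneg (v i), hvn i hi]
  · rw [hx3]
    exact sum_norm_le_one t w (fun i => u i * v i) hw0 hw1 fun i hi => by
      rw [norm_mul]; exact mul_le_one₀ (hun i hi) (norm_nonneg _) (hvn i hi)
  · rw [hx1, hx2, hx3]
    exact core_sum t w u v hw0 hw1 hun hvn

lemma separation {lam : ℂ × ℂ × ℂ}
    (hcon : ∀ A B C : ℂ, ‖A * lam.1 + B * lam.2.1 + C * lam.2.2‖ ≤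
      sSup ((fun z => ‖A * z.1 + B * z.2.1 + C * z.2.2‖) '' calV)) :
    lam ∈ closure (convexHull ℝ calV) := by
  by_contra hnot
  obtain ⟨f, c, hfK, hflam⟩ := geometric_hahn_banach_closed_point
    ((convex_convexHull ℝ calV).closure) isClosed_closure hnot
  set A : ℂ := (f (1,0,0) : ℂ) - Complex.I * (f (Complex.I • ((1,0,0) : ℂ × ℂ × ℂ)) : ℂ) with hA
  set B : ℂ := (f (0,1,0) : ℂ) - Complex.I * (f (Complex.I • ((0,1,0) : ℂ × ℂ × ℂ)) : ℂ) with hB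
  set C : ℂ := (f (0,0,1) : ℂ) - Complex.I * (f (Complex.I • ((0,0,1) : ℂ × ℂ × ℂ)) : ℂ) with hC
  set l : ℂ × ℂ × ℂ → ℂ := fun z => A * z.1 + B * z.2.1 + C * z.2.2 with hl
  have hsplit : ∀ (w : ℂ) (x : ℂ × ℂ × ℂ),
      f (w • x) = w.re * f x + w.im * f (Complex.I • x) := by
    intro w x
    have hco : ∀ (r : ℝ) (y : ℂ × ℂ × ℂ), ((r : ℂ)) • y = r • y := by
      intro r y
      rw [show ((r:ℂ)) = r • (1:ℂ) from by rw [Complex.real_smul]; simp]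
      rw [smul_one_smul]
    have hdec : w • x = w.re • x + w.im • (Complex.I • x) := by
      calc w • x = ((w.re : ℂ) + (w.im : ℂ) * Complex.I) • x := by rw [Complex.re_add_im]
        _ = (w.re : ℂ) • x + ((w.im : ℂ) * Complex.I) • x := add_smul _ _ _
        _ = w.re • x + w.im • (Complex.I • x) := by
            rw [mul_smul, hco, hco]
    rw [hdec, map_add, map_smul, map_smul]
    simp [smul_eq_mul]
  have hfz : ∀ z : ℂ × ℂ × ℂ, (l z).re = f z := by
    intro z
    have hz_dec : z = z.1 • ((1,0,0) : ℂ × ℂ × ℂ) + z.2.1 • ((0,1,0) : ℂ × ℂ × ℂ)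
        + z.2.2 • ((0,0,1) : ℂ × ℂ × ℂ) := by
      rw [Prod.ext_iff, Prod.ext_iff]
      refine ⟨?_, ?_, ?_⟩ <;> simp
    have hfz' : f z = z.1.re * f (1,0,0) + z.1.im * f (Complex.I • ((1,0,0) : ℂ × ℂ × ℂ))
        + (z.2.1.re * f (0,1,0) + z.2.1.im * f (Complex.I • ((0,1,0) : ℂ × ℂ × ℂ)))
        + (z.2.2.re * f (0,0,1) + z.2.2.im * f (Complex.I • ((0,0,1) : ℂ × ℂ × ℂ))) := by
      nth_rewrite 1 [hz_dec]
      rw [map_add, map_add, hsplit z.1 ((1,0,0) : ℂ × ℂ × ℂ), hsplit z.2.1 ((0,1,0) : ℂ × ℂ × ℂ), hsplit z.2.2 ((0,0,1) : ℂ × ℂ × ℂ)]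
    rw [hfz', hl]
    show (A * z.1 + B * z.2.1 + C * z.2.2).re = _
    rw [hA, hB, hC]
    simp only [Complex.add_re, Complex.mul_re, Complex.sub_re, Complex.sub_im,
      Complex.ofReal_re, Complex.ofReal_im, Complex.mul_im, Complex.I_re, Complex.I_im]
    ring
  have hc0 : 0 < c := by
    have h0K : (0 : ℂ × ℂ × ℂ) ∈ closure (convexHull ℝ calV) := by
      apply subset_closure
      apply subset_convexHull
      exact V0
    have := hfK 0 h0K
    rwa [map_zero] at this
  have hKmem : ∀ z ∈ calV, ‖l z‖ < c := by
    intro z hz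
    rcases eq_or_ne (l z) 0 with h | h
    · rw [h, norm_zero]; exact hc0
    · set ω : ℂ := (‖l z‖ : ℂ) / l z with hω
      have hωn : ‖ω‖ = 1 := by
        rw [hω, norm_div, Complex.norm_real, Real.norm_eq_abs,
          abs_of_nonneg (norm_nonneg _)]
        exact div_self (norm_ne_zero_iff.mpr h)
      have hlω : l (ω • z) = (‖l z‖ : ℂ) := by
        have : l (ω • z) = ω * l z := by
          rw [hl]
          show A * (ω • z).1 + B * (ω • z).2.1 + C * (ω • z).2.2 = ω * (A * z.1 + B * z.2.1 + C * z.2.2)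
          rw [show (ω • z).1 = ω * z.1 from rfl, show (ω • z).2.1 = ω * z.2.1 from rfl,
            show (ω • z).2.2 = ω * z.2.2 from rfl]
          ring
        rw [this, hω, div_mul_cancel₀ _ h]
      have hmem : ω • z ∈ closure (convexHull ℝ calV) :=
        subset_closure (subset_convexHull ℝ calV (calV_bal hωn.le hz))
      have := hfK _ hmem
      rw [← hfz (ω • z), hlω] at this
      simpa using this
  have hSle : sSup ((fun z => ‖A * z.1 + B * z.2.1 + C * z.2.2‖) '' calV) ≤ c := by
    apply Real.sSup_le
    · rintro x ⟨z, hz, rfl⟩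
      exact (hKmem z hz).le
    · exact hc0.le
  have hlamle : f lam ≤ c := by
    calc f lam = (l lam).re := (hfz lam).symm
      _ ≤ ‖l lam‖ := by
          exact Complex.re_le_norm _
      _ ≤ sSup ((fun z => ‖A * z.1 + B * z.2.1 + C * z.2.2‖) '' calV) := hcon A B C
      _ ≤ c := hSle
  linarith


set_option maxHeartbeats 1000000 in
theorem stmt_18 (G : Set (ℂ × ℂ × ℂ)) (hG : IsOpen G) (hbal : Balanced ℂ G)
    (hVG : calV ⊆ G)
    (hnp : ∀ f : ℂ × ℂ × ℂ → ℂ, HoloOnV f → (∃ C : ℝ, ∀ z ∈ calV, ‖f z‖ ≤ C) →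
      ∃ F : ℂ × ℂ × ℂ → ℂ, DifferentiableOn ℂ F G ∧ (∀ z ∈ calV, F z = f z) ∧
        sSup ((fun z => ‖F z‖) '' G) = sSup ((fun z => ‖f z‖) '' calV)) :
    G ⊆ calG := by
  intro lam hlam
  obtain ⟨ε, hε, hball⟩ := Metric.isOpen_iff.mp hG lam hlam
  set δ : ℝ := ε / (2 * (‖lam‖ + 1)) with hδ
  have hδpos : 0 < δ := by
    apply div_pos hε
    positivity
  set r : ℝ := 1 + δ with hrdef
  have hr1 : 1 < r := by rw [hrdef]; linarith
  have hrpos : 0 < r := by linarith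
  set mu : ℂ × ℂ × ℂ := (r : ℂ) • lam with hmu
  have hmuG : mu ∈ G := by
    apply hball
    rw [mem_ball, dist_eq_norm]
    have h1 : mu - lam = ((r : ℂ) - 1) • lam := by
      rw [hmu, sub_smul, one_smul]
    rw [h1, norm_smul]
    have h2 : ‖(r : ℂ) - 1‖ = δ := by
      rw [show ((r : ℂ) - 1) = ((δ : ℝ) : ℂ) from by rw [hrdef]; push_cast; ring]
      rw [Complex.norm_real, Real.norm_eq_abs, abs_of_pos hδpos]
    rw [h2, hδ]
    rw [div_mul_eq_mul_div]
    rw [div_lt_iff₀ (by positivity)]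
    nlinarith [norm_nonneg lam]
  have hmuW : mu ∈ Wset := by
    have h1 : closure (convexHull ℝ calV) ⊆ Wset :=
      closure_minimal hull_sub_W Wset_closed
    exact h1 (separation (fun A B C => linear_constraint G hG hbal hVG hnp hmuG A B C))
  obtain ⟨w1, w2, w3, w4⟩ := hmuW
  have hm1 : mu.1 = (r : ℂ) * lam.1 := rfl
  have hm2 : mu.2.1 = (r : ℂ) * lam.2.1 := rfl
  have hm3 : mu.2.2 = (r : ℂ) * lam.2.2 := rfl
  have hnr : ‖(r : ℂ)‖ = r := by
    rw [Complex.norm_real, Real.norm_eq_abs, abs_of_pos hrpos]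
  rw [hm1, norm_mul, hnr] at w1
  rw [hm2, norm_mul, hnr] at w2
  rw [hm3, norm_mul, hnr] at w3
  have hl1 : ‖lam.1‖ < 1 := by nlinarith [norm_nonneg lam.1]
  have hl2 : ‖lam.2.1‖ < 1 := by nlinarith [norm_nonneg lam.2.1]
  have hl3 : ‖lam.2.2‖ < 1 := by nlinarith [norm_nonneg lam.2.2]
  refine ⟨⟨?_, ?_, ?_⟩, ?_⟩
  · exact mem_ball_zero_iff.mpr hl1
  · exact mem_ball_zero_iff.mpr hl2
  · exact mem_ball_zero_iff.mpr hl3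
  -- the strict inequality
  set p : ℂ := lam.1 * lam.2.1 - lam.2.2 ^ 2 with hp
  have hmup : mu.1 * mu.2.1 - mu.2.2 ^ 2 = (r : ℂ)^2 * p := by
    rw [hm1, hm2, hm3, hp]; ring
  rw [hmup] at w4
  have hw4' : r^2 * ‖p‖ ≤ (1 - ‖mu.2.2‖ ^ 2)
      + Real.sqrt (1 - ‖mu.1‖ ^ 2) * Real.sqrt (1 - ‖mu.2.1‖ ^ 2) := by
    have : ‖(r : ℂ)^2 * p‖ = r^2 * ‖p‖ := by
      rw [norm_mul, norm_pow, hnr]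
    rw [← this]
    exact w4
  have hmono : (1 - ‖mu.2.2‖ ^ 2)
      + Real.sqrt (1 - ‖mu.1‖ ^ 2) * Real.sqrt (1 - ‖mu.2.1‖ ^ 2)
      ≤ (1 - ‖lam.2.2‖ ^ 2)
      + Real.sqrt (1 - ‖lam.1‖ ^ 2) * Real.sqrt (1 - ‖lam.2.1‖ ^ 2) := by
    have e1 : ‖mu.1‖ = r * ‖lam.1‖ := by rw [hm1, norm_mul, hnr]
    have e2 : ‖mu.2.1‖ = r * ‖lam.2.1‖ := by rw [hm2, norm_mul, hnr]
    have e3 : ‖mu.2.2‖ = r * ‖lam.2.2‖ := by rw [hm3, norm_mul, hnr]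
    have hr2 : 1 ≤ r^2 := by nlinarith
    have m3 : 1 - ‖mu.2.2‖^2 ≤ 1 - ‖lam.2.2‖^2 := by
      rw [e3]
      nlinarith [sq_nonneg ‖lam.2.2‖, hr2]
    have m1 : Real.sqrt (1 - ‖mu.1‖ ^ 2) ≤ Real.sqrt (1 - ‖lam.1‖ ^ 2) := by
      apply Real.sqrt_le_sqrt
      rw [e1]
      nlinarith [sq_nonneg ‖lam.1‖, hr2]
    have m2 : Real.sqrt (1 - ‖mu.2.1‖ ^ 2) ≤ Real.sqrt (1 - ‖lam.2.1‖ ^ 2) := by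
      apply Real.sqrt_le_sqrt
      rw [e2]
      nlinarith [sq_nonneg ‖lam.2.1‖, hr2]
    exact add_le_add m3 (mul_le_mul m1 m2 (Real.sqrt_nonneg _) (Real.sqrt_nonneg _))
  show ‖p‖ < (1 - ‖lam.2.2‖ ^ 2)
      + Real.sqrt (1 - ‖lam.1‖ ^ 2) * Real.sqrt (1 - ‖lam.2.1‖ ^ 2)
  rcases eq_or_ne p 0 with hp0 | hp0
  · rw [hp0, norm_zero]
    have h1 : 0 < 1 - ‖lam.2.2‖^2 := by nlinarith [norm_nonneg lam.2.2]
    have h2 : 0 ≤ Real.sqrt (1 - ‖lam.1‖ ^ 2) * Real.sqrt (1 - ‖lam.2.1‖ ^ 2) :=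
      mul_nonneg (Real.sqrt_nonneg _) (Real.sqrt_nonneg _)
    linarith
  · have hppos : 0 < ‖p‖ := norm_pos_iff.mpr hp0
    have hr2 : 1 < r^2 := by nlinarith
    have hlt : ‖p‖ < r^2 * ‖p‖ := (lt_mul_iff_one_lt_left hppos).mpr hr2
    linarith [hw4'.trans hmono]
end
end

section
/- Let x₁, …, x_d be upper triangular n×n complex matrices, let 1 ≤ j ≤ n, and let λ = (λ₁, …, λ_d) ∈ ℂ^d where λ_i is the j-th diagonal entry of x_i. Let δ = (δ_{ab}) be an I×J matrix whose entries are noncommutative polynomials in d variables. Then ‖δ(λ)‖ ≤ ‖δ(x)‖, where δ(λ) is the I×J scalar matrix (δ_{ab}(λ₁,…,λ_d)), δ(x) is the block matrix (δ_{ab}(x₁,…,x_d)) regarded as an operator from ℂ^J ⊗ ℂⁿ to ℂ^I ⊗ ℂⁿ, and ‖·‖ denotes operator norms with respect to Euclidean norms. In particular, if ‖δ(x)‖ < 1 then ‖δ(λ)‖ < 1. -/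
noncomputable section

/-- Evaluation of a noncommutative polynomial in `d` variables (an element of the
free algebra on `d` generators) at a `d`-tuple `y` in a unital `ℂ`-algebra `A`:
the image under the unique unital algebra homomorphism sending the `i`-th generator
to `y i`. -/
def ncEval {d : ℕ} {A : Type*} [Ring A] [Algebra ℂ A] (y : Fin d → A)
    (δ : FreeAlgebra ℂ (Fin d)) : A :=
  FreeAlgebra.lift ℂ y δ

lemma ncEval_diag {d n : ℕ} (x : Fin d → Matrix (Fin n) (Fin n) ℂ)
    (hx : ∀ i, (x i).BlockTriangular (id : Fin n → Fin n)) (j : Fin n)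
    (p : FreeAlgebra ℂ (Fin d)) :
    (ncEval x p).BlockTriangular (id : Fin n → Fin n) ∧
      (ncEval x p) j j = ncEval (fun i => x i j j) p := by
  induction p using FreeAlgebra.induction with
  | grade0 r =>
    simp only [ncEval, AlgHom.commutes, Matrix.algebraMap_eq_diagonal]
    refine ⟨Matrix.blockTriangular_diagonal _, ?_⟩
    simp [Algebra.algebraMap_self_apply]
  | grade1 i =>
    simp only [ncEval, FreeAlgebra.lift_ι_apply]
    exact ⟨hx i, trivial⟩
  | mul a b ha hb =>
    obtain ⟨hA, hAj⟩ := ha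
    obtain ⟨hB, hBj⟩ := hb
    simp only [ncEval, map_mul] at *
    refine ⟨hA.mul hB, ?_⟩
    rw [Matrix.mul_apply, Finset.sum_eq_single j]
    · rw [hAj, hBj]
    · intro k _ hk
      rcases lt_or_gt_of_ne hk with h | h
      · rw [hA h, zero_mul]
      · rw [hB h, mul_zero]
    · intro h; exact absurd (Finset.mem_univ j) h
  | add a b ha hb =>
    obtain ⟨hA, hAj⟩ := ha
    obtain ⟨hB, hBj⟩ := hb
    simp only [ncEval, map_add] at *
    exact ⟨hA.add hB, by simp [Matrix.add_apply, hAj, hBj]⟩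

lemma compress_le {I J n : ℕ} (j : Fin n) (A : Matrix (Fin I × Fin n) (Fin J × Fin n) ℂ) :
    opNorm (Matrix.of fun a b => A (a, j) (b, j)) ≤ opNorm A := by
  set B : Matrix (Fin I) (Fin J) ℂ := Matrix.of fun a b => A (a, j) (b, j) with hBdef
  unfold opNorm
  apply ContinuousLinearMap.opNorm_le_bound _ (norm_nonneg _)
  intro v
  set ev : EuclideanSpace ℂ (Fin J × Fin n) := WithLp.toLp 2 (fun (q : Fin J × Fin n) => if q.2 = j then v q.1 else 0) with hev
  have hnorm_ev : ‖ev‖ = ‖v‖ := by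
    rw [EuclideanSpace.norm_eq, EuclideanSpace.norm_eq]
    congr 1
    rw [Fintype.sum_prod_type]
    refine Finset.sum_congr rfl fun b _ => ?_
    rw [Finset.sum_eq_single j]
    · simp [hev]
    · intro k _ hk; simp [hev, hk]
    · intro h; exact absurd (Finset.mem_univ j) h
  have happ : ∀ a, (Matrix.toEuclideanLin B v) a = (Matrix.toEuclideanLin A ev) (a, j) := by
    intro a
    simp only [Matrix.toEuclideanLin_apply]
    show B.mulVec _ a = A.mulVec _ (a, j)
    simp only [Matrix.mulVec, dotProduct]
    rw [Fintype.sum_prod_type]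
    refine Finset.sum_congr rfl fun b _ => ?_
    rw [Finset.sum_eq_single j]
    · simp [hBdef, hev]
    · intro k _ hk; simp [hev, hk]
    · intro h; exact absurd (Finset.mem_univ j) h
  have h1 : ‖Matrix.toEuclideanLin B v‖ ≤ ‖Matrix.toEuclideanLin A ev‖ := by
    rw [EuclideanSpace.norm_eq, EuclideanSpace.norm_eq]
    apply Real.sqrt_le_sqrt
    rw [Fintype.sum_prod_type]
    refine Finset.sum_le_sum fun a _ => ?_
    rw [happ a]
    exact Finset.single_le_sum (f := fun k => ‖Matrix.toEuclideanLin A ev (a, k)‖ ^ 2) (fun k _ => sq_nonneg _) (Finset.mem_univ j)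
  calc ‖(LinearMap.toContinuousLinearMap (Matrix.toEuclideanLin B)) v‖
      = ‖Matrix.toEuclideanLin B v‖ := rfl
    _ ≤ ‖Matrix.toEuclideanLin A ev‖ := h1
    _ = ‖(LinearMap.toContinuousLinearMap (Matrix.toEuclideanLin A)) ev‖ := rfl
    _ ≤ ‖LinearMap.toContinuousLinearMap (Matrix.toEuclideanLin A)‖ * ‖ev‖ :=
        ContinuousLinearMap.le_opNorm _ _
    _ = ‖LinearMap.toContinuousLinearMap (Matrix.toEuclideanLin A)‖ * ‖v‖ := by rw [hnorm_ev]

theorem stmt_19 (d n I J : ℕ) (x : Fin d → Matrix (Fin n) (Fin n) ℂ)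
    (hx : ∀ i, (x i).BlockTriangular (id : Fin n → Fin n))
    (j : Fin n) (lam : Fin d → ℂ) (hlam : ∀ i, lam i = x i j j)
    (δ : Matrix (Fin I) (Fin J) (FreeAlgebra ℂ (Fin d))) :
    -- `δ(λ)` is the scalar `I × J` matrix `(δ_{ab}(λ))`, and `δ(x)` is the block matrix
    -- `(δ_{ab}(x))`, regarded as an operator from `ℂ^J ⊗ ℂ^n` to `ℂ^I ⊗ ℂ^n`.
    opNorm (Matrix.of fun a b => ncEval (fun i => (lam i : ℂ)) (δ a b)) ≤
      opNorm (Matrix.of fun (p : Fin I × Fin n) (q : Fin J × Fin n) =>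
        ncEval x (δ p.1 q.1) p.2 q.2) ∧
    (opNorm (Matrix.of fun (p : Fin I × Fin n) (q : Fin J × Fin n) =>
        ncEval x (δ p.1 q.1) p.2 q.2) < 1 →
      opNorm (Matrix.of fun a b => ncEval (fun i => (lam i : ℂ)) (δ a b)) < 1) := by
  have hδ : (Matrix.of fun a b => ncEval (fun i => (lam i : ℂ)) (δ a b)) =
      Matrix.of fun a b =>
        (Matrix.of fun (p : Fin I × Fin n) (q : Fin J × Fin n) =>
          ncEval x (δ p.1 q.1) p.2 q.2) (a, j) (b, j) := by
    ext a b
    have := (ncEval_diag x hx j (δ a b)).2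
    simp only [Matrix.of_apply]
    rw [show (fun i => (lam i : ℂ)) = fun i => x i j j from funext fun i => hlam i, ← this]
  constructor
  · rw [hδ]; exact compress_le j _
  · intro h; rw [hδ]; exact lt_of_le_of_lt (compress_le j _) h
end
end
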